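/- arXiv:1604.04904 — 4 statements merged into one kernel-verified Lean document; each statement's English description precedes it below -/
import Mathlib

section
/- Let h and k be coprime odd positive integers. Then B₁(h,k) = -10h·s(h,k) + 4h·s(2h,k) + 4h·s(h,2k) + 1/(2k) - 1/2. -/
/-- The sawtooth function `((x))`: equals `x - ⌊x⌋ - 1/2` if `x` is not an integer,
and `0` if `x` is an integer. -/
def saw (x : ℚ) : ℚ := if x = (⌊x⌋ : ℚ) then 0 else x - ⌊x⌋ - 1/2

/-- `B₁(h,k) = Σ_{j=1}^{k-1} (-1)^{j+⌊hj/k⌋}·⌊hj/k⌋`. -/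
noncomputable def B1 (h k : ℤ) : ℚ :=
  ∑ j ∈ Finset.Icc (1 : ℤ) (k - 1),
    (-1 : ℚ) ^ (j + ⌊((h * j : ℤ) : ℚ) / (k : ℚ)⌋) * (⌊((h * j : ℤ) : ℚ) / (k : ℚ)⌋ : ℚ)

/-- The Dedekind sum `s(h,k) = Σ_{j=1}^{k-1} ((hj/k))·((j/k))`. -/
noncomputable def dedekindS (h k : ℤ) : ℚ :=
  ∑ j ∈ Finset.Icc (1 : ℤ) (k - 1),
    saw (((h * j : ℤ) : ℚ) / (k : ℚ)) * saw ((j : ℚ) / (k : ℚ))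

lemma saw_eq (x : ℚ) (hx : x ≠ (⌊x⌋:ℚ)) : saw x = x - ⌊x⌋ - 1/2 := if_neg hx

lemma saw_intCast (n : ℤ) : saw (n:ℚ) = 0 := by simp [saw]

lemma saw_int_add (x : ℚ) (n : ℤ) : saw (x + n) = saw x := by
  unfold saw
  rw [Int.floor_add_intCast]
  by_cases h : x = (⌊x⌋:ℚ)
  · rw [if_pos (by rw [Int.cast_add]; exact by rw [← h]), if_pos h]
  · rw [if_neg (by push_cast; intro hc; apply h; linarith), if_neg h]; push_cast; ring

lemma saw_neg (x : ℚ) : saw (-x) = - saw x := by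
  by_cases h : x = (⌊x⌋:ℚ)
  · rw [h, ← Int.cast_neg, saw_intCast, saw_intCast]; ring
  · have hlt : (⌊x⌋:ℚ) < x := lt_of_le_of_ne (Int.floor_le x) (Ne.symm h)
    have h2 : ⌊-x⌋ = -⌊x⌋ - 1 := by
      rw [Int.floor_eq_iff]
      push_cast
      constructor
      · nlinarith [Int.lt_floor_add_one x]
      · nlinarith
    have h3 : -x ≠ (⌊-x⌋:ℚ) := by
      rw [h2]; push_cast; intro hc
      nlinarith [Int.lt_floor_add_one x]
    rw [saw_eq _ h3, saw_eq _ h, h2]; push_cast; ring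

lemma nonint_of_eq_floor (x : ℚ) (n : ℤ) (h : x = (n:ℚ)) : x = (⌊x⌋:ℚ) := by
  rw [h, Int.floor_intCast]

lemma saw_double (x : ℚ) (hx : 2*x ≠ (⌊2*x⌋:ℚ)) : saw (2*x) = saw x + saw (x + 1/2) := by
  have hx1 : x ≠ (⌊x⌋:ℚ) := by
    intro hc; exact hx (nonint_of_eq_floor _ (2*⌊x⌋) (by rw [hc]; push_cast [Int.floor_intCast]; ring))
  have hx2 : x + 1/2 ≠ (⌊x + 1/2⌋:ℚ) := by
    intro hc
    exact hx (nonint_of_eq_floor _ (2*⌊x+1/2⌋ - 1) (by push_cast; linarith))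
  have h1 := Int.floor_le x
  have h2 := Int.lt_floor_add_one x
  have hne : x - (⌊x⌋:ℚ) ≠ 1/2 := by
    intro hc; exact hx2 (nonint_of_eq_floor _ (⌊x⌋ + 1) (by push_cast; linarith))
  have hfl : ⌊2*x⌋ = ⌊x⌋ + ⌊x + 1/2⌋ := by
    rcases lt_or_gt_of_ne hne with hc | hc
    · have e1 : ⌊x + 1/2⌋ = ⌊x⌋ := by rw [Int.floor_eq_iff] <;> push_cast <;> constructor <;> linarith
      have e2 : ⌊2*x⌋ = 2*⌊x⌋ := by rw [Int.floor_eq_iff] <;> push_cast <;> constructor <;> linarith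
      omega
    · have e1 : ⌊x + 1/2⌋ = ⌊x⌋ + 1 := by
        rw [Int.floor_eq_iff] <;> push_cast <;> constructor <;> linarith
      have e2 : ⌊2*x⌋ = 2*⌊x⌋ + 1 := by
        rw [Int.floor_eq_iff] <;> push_cast <;> constructor <;> linarith
      omega
  rw [saw_eq _ hx, saw_eq _ hx1, saw_eq _ hx2, hfl]; push_cast; ring

lemma div_ne_intCast (n b : ℤ) (hb : b ≠ 0) (h : ¬ b ∣ n) (z : ℤ) : ((n:ℚ)/b) ≠ (z:ℚ) := by
  intro hc
  apply h
  have hbq : (b:ℚ) ≠ 0 := Int.cast_ne_zero.mpr hb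
  have h2 : (n:ℚ) = ((b*z : ℤ):ℚ) := by field_simp at hc; push_cast; linarith
  exact ⟨z, by exact_mod_cast h2⟩

lemma periodic_all {F : ℤ → ℚ} {k : ℤ} (hF : ∀ j, F (j + k) = F j) : ∀ (n j : ℤ), F (j + n*k) = F j := by
  intro n
  induction n using Int.induction_on with
  | zero => simp
  | succ i ih => intro j; rw [show j + ((i:ℤ)+1)*k = (j + i*k) + k by ring, hF, ih]
  | pred i ih =>
      intro j
      calc F (j + (-(i:ℤ)-1)*k) = F (j + (-(i:ℤ)-1)*k + k) := (hF _).symm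
        _ = F (j + (-(i:ℤ))*k) := by rw [show j + (-(i:ℤ)-1)*k + k = j + (-(i:ℤ))*k by ring]
        _ = F j := ih j

lemma sum_reindex (k a : ℤ) (hk : 0 < k) (hak : IsCoprime a k) (F : ℤ → ℚ)
    (hF : ∀ j, F (j + k) = F j) :
    ∑ j ∈ Finset.Icc 1 (k-1), F (a*j) = ∑ j ∈ Finset.Icc 1 (k-1), F j := by
  obtain ⟨b, c, hbc⟩ := hak
  have hknz : k ≠ 0 := by omega
  have key : ∀ x : ℤ, F x = F (x % k) := by
    intro x
    conv_lhs => rw [← Int.emod_add_ediv_mul x k]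
    exact periodic_all hF _ _
  have hndvd : ∀ j : ℤ, 1 ≤ j → j ≤ k - 1 → ¬ (k ∣ j) := by
    intro j h1 h2 hd
    have := Int.le_of_dvd (by omega) hd
    omega
  have memb : ∀ (e : ℤ), IsCoprime e k → ∀ j ∈ Finset.Icc (1:ℤ) (k-1), e*j % k ∈ Finset.Icc (1:ℤ) (k-1) := by
    intro e he j hj
    simp only [Finset.mem_Icc] at hj ⊢
    have h0 : 0 ≤ e*j % k := Int.emod_nonneg _ hknz
    have h1 : e*j % k < k := Int.emod_lt_of_pos _ hk
    have hne : e*j % k ≠ 0 := by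
      intro hc
      have hd : k ∣ e*j := Int.dvd_of_emod_eq_zero hc
      have : k ∣ j := (he.symm).dvd_of_dvd_mul_left hd
      exact hndvd j hj.1 hj.2 this
    omega
  have hba : b*a = 1 - c*k := by linarith
  have hab : a*b = 1 - c*k := by linarith [mul_comm a b]
  have inv1 : ∀ (e f : ℤ), e*f = 1 - c*k → ∀ j : ℤ, 1 ≤ j → j ≤ k-1 → (e * (f*j % k)) % k = j := by
    intro e f hef j h1 h2
    have step1 : (e * (f*j % k)) % k = (e * (f*j)) % k := by
      rw [Int.mul_emod, Int.mul_emod e (f*j), Int.emod_emod_of_dvd _ dvd_rfl]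
    rw [step1, show e*(f*j) = j + (-(c*j))*k by rw [← mul_assoc, hef]; ring,
      Int.add_mul_emod_self_right, Int.emod_eq_of_lt (by omega) (by omega)]
  have hcopb : IsCoprime b k := ⟨a, c, by linarith [mul_comm a b]⟩
  have hcopa : IsCoprime a k := ⟨b, c, hbc⟩
  calc ∑ j ∈ Finset.Icc 1 (k-1), F (a*j) = ∑ j ∈ Finset.Icc 1 (k-1), F (a*j % k) := by
        exact Finset.sum_congr rfl (fun j _ => key _)
    _ = ∑ j ∈ Finset.Icc 1 (k-1), F j := by
        apply Finset.sum_nbij' (i := fun j => a*j % k) (j := fun j => b*j % k)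
          (memb a hcopa) (memb b hcopb)
        · intro j hj
          simp only [Finset.mem_Icc] at hj
          exact inv1 b a hba j hj.1 hj.2
        · intro j hj
          simp only [Finset.mem_Icc] at hj
          exact inv1 a b hab j hj.1 hj.2
        · intro j _; rfl

lemma sum_shift (k : ℤ) (hk : 0 < k) (H : ℤ → ℚ) (hH : ∀ j, H (j + k) = H j) (c : ℤ) :
    ∑ j ∈ Finset.Ico c (c+k), H j = ∑ j ∈ Finset.Ico 0 k, H j := by
  have step : ∀ c : ℤ, ∑ j ∈ Finset.Ico (c+1) (c+1+k), H j = ∑ j ∈ Finset.Ico c (c+k), H j := by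
    intro c
    have e1 : Finset.Ico c (c+k) = insert c (Finset.Ico (c+1) (c+k)) := by
      ext x; simp only [Finset.mem_Ico, Finset.mem_insert]; omega
    have e2 : Finset.Ico (c+1) (c+1+k) = insert (c+k) (Finset.Ico (c+1) (c+k)) := by
      ext x; simp only [Finset.mem_Ico, Finset.mem_insert]; omega
    rw [e1, e2, Finset.sum_insert (by simp), Finset.sum_insert (by simp only [Finset.mem_Ico]; omega), hH c]
  induction c using Int.induction_on with
  | zero => norm_num
  | succ i ih => rw [step (i:ℤ), ih]
  | pred i ih => rw [← ih, ← step (-(i:ℤ)-1)]; norm_num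

lemma Icc_top_succ (n : ℤ) (hn : 0 ≤ n) : Finset.Icc (1:ℤ) (n+1) = insert (n+1) (Finset.Icc 1 n) := by
  ext x; simp only [Finset.mem_Icc, Finset.mem_insert]; omega

lemma sum_id (n : ℤ) (hn : 0 ≤ n) : ∑ j ∈ Finset.Icc (1:ℤ) n, (j:ℚ) = n*(n+1)/2 := by
  obtain ⟨N, rfl⟩ := Int.eq_ofNat_of_zero_le hn
  clear hn
  induction N with
  | zero =>
      rw [show ((0:ℕ):ℤ) = 0 from rfl, show Finset.Icc (1:ℤ) 0 = ∅ from Finset.Icc_eq_empty (by omega)]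
      simp
  | succ N ih =>
      rw [show ((N+1 : ℕ):ℤ) = (N:ℤ)+1 by push_cast; ring, Icc_top_succ N (by positivity),
        Finset.sum_insert (by simp), ih]
      push_cast; ring

lemma sum_sq (n : ℤ) (hn : 0 ≤ n) : ∑ j ∈ Finset.Icc (1:ℤ) n, (j:ℚ)^2 = n*(n+1)*(2*n+1)/6 := by
  obtain ⟨N, rfl⟩ := Int.eq_ofNat_of_zero_le hn
  clear hn
  induction N with
  | zero =>
      rw [show ((0:ℕ):ℤ) = 0 from rfl, show Finset.Icc (1:ℤ) 0 = ∅ from Finset.Icc_eq_empty (by omega)]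
      simp
  | succ N ih =>
      rw [show ((N+1 : ℕ):ℤ) = (N:ℤ)+1 by push_cast; ring, Icc_top_succ N (by positivity),
        Finset.sum_insert (by simp), ih]
      push_cast; ring

lemma saw_zero : saw 0 = 0 := by norm_num [saw]

lemma saw_half : saw (1/2 : ℚ) = 0 := by
  have : ⌊(1/2 : ℚ)⌋ = 0 := by norm_num [Int.floor_eq_zero_iff]
  unfold saw
  rw [this]
  norm_num

lemma nonint_mul (k a j : ℤ) (hk : 0 < k) (hak : IsCoprime a k) (h1 : 1 ≤ j) (h2 : j ≤ k-1) :
    ((a*j : ℤ):ℚ)/(k:ℚ) ≠ (⌊((a*j : ℤ):ℚ)/(k:ℚ)⌋:ℚ) := by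
  apply div_ne_intCast _ _ (by omega)
  intro hd
  have hdj : k ∣ j := hak.symm.dvd_of_dvd_mul_left hd
  have := Int.le_of_dvd (by omega) hdj
  omega

lemma saw_lin (k j : ℤ) (hk : 0 < k) (h1 : 1 ≤ j) (h2 : j ≤ k-1) :
    saw ((j:ℚ)/(k:ℚ)) = (j:ℚ)/k - 1/2 := by
  have hni := nonint_mul k 1 j hk isCoprime_one_left h1 h2
  rw [show ((1*j : ℤ):ℚ) = (j:ℚ) by push_cast; ring] at hni
  rw [saw_eq _ hni]
  have hfl : ⌊(j:ℚ)/(k:ℚ)⌋ = 0 := by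
    rw [Int.floor_eq_zero_iff]
    constructor
    · apply div_nonneg <;> [exact_mod_cast (by omega : (0:ℤ) ≤ j); exact_mod_cast (by omega : (0:ℤ) ≤ k)]
    · rw [div_lt_one (by exact_mod_cast hk)]
      exact_mod_cast (by omega : j < k)
  rw [hfl]
  norm_num

lemma sum_saw_zero (k a : ℤ) (hk : 0 < k) :
    ∑ j ∈ Finset.Icc (1:ℤ) (k-1), saw (((a*j:ℤ):ℚ)/(k:ℚ)) = 0 := by
  have hkq : (k:ℚ) ≠ 0 := Int.cast_ne_zero.mpr (by omega)
  have key : ∀ j : ℤ, saw (((a*(k-j):ℤ):ℚ)/(k:ℚ)) = - saw (((a*j:ℤ):ℚ)/(k:ℚ)) := by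
    intro j
    have e : ((a*(k-j):ℤ):ℚ)/(k:ℚ) = -(((a*j:ℤ):ℚ)/(k:ℚ)) + ((a:ℤ):ℚ) := by
      push_cast; field_simp; ring
    rw [e, saw_int_add, saw_neg]
  have flip : ∑ j ∈ Finset.Icc (1:ℤ) (k-1), saw (((a*j:ℤ):ℚ)/(k:ℚ))
      = ∑ j ∈ Finset.Icc (1:ℤ) (k-1), saw (((a*(k-j):ℤ):ℚ)/(k:ℚ)) := by
    apply Finset.sum_nbij' (i := fun j => k - j) (j := fun j => k - j)
    · intro x hx; simp only [Finset.mem_Icc] at *; omega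
    · intro x hx; simp only [Finset.mem_Icc] at *; omega
    · intro x _; omega
    · intro x _; omega
    · intro x _; rw [show k - (k - x) = x by ring]
  have : ∑ j ∈ Finset.Icc (1:ℤ) (k-1), saw (((a*j:ℤ):ℚ)/(k:ℚ))
      = - ∑ j ∈ Finset.Icc (1:ℤ) (k-1), saw (((a*j:ℤ):ℚ)/(k:ℚ)) := by
    nth_rewrite 1 [flip]
    rw [← Finset.sum_neg_distrib]
    exact Finset.sum_congr rfl (fun j _ => key j)
  linarith

lemma sum_saw_sq (k a : ℤ) (hk : 0 < k) (hak : IsCoprime a k) :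
    ∑ j ∈ Finset.Icc (1:ℤ) (k-1), (saw (((a*j:ℤ):ℚ)/(k:ℚ)))^2
      = ((k:ℚ)-1)*((k:ℚ)-2)/(12*k) := by
  have hkq : (k:ℚ) ≠ 0 := Int.cast_ne_zero.mpr (by omega)
  have hF : ∀ j : ℤ, (saw (((j+k:ℤ):ℚ)/(k:ℚ)))^2 = (saw ((j:ℚ)/(k:ℚ)))^2 := by
    intro j
    rw [show ((j+k:ℤ):ℚ)/(k:ℚ) = (j:ℚ)/(k:ℚ) + ((1:ℤ):ℚ) by push_cast; field_simp, saw_int_add]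
  have hre := sum_reindex k a hk hak (fun j => (saw ((j:ℚ)/(k:ℚ)))^2)
    (by intro j; exact_mod_cast hF j)
  calc ∑ j ∈ Finset.Icc (1:ℤ) (k-1), (saw (((a*j:ℤ):ℚ)/(k:ℚ)))^2
      = ∑ j ∈ Finset.Icc (1:ℤ) (k-1), (saw ((j:ℚ)/(k:ℚ)))^2 := by exact_mod_cast hre
    _ = ∑ j ∈ Finset.Icc (1:ℤ) (k-1), ((j:ℚ)^2*(1/k^2) - (j:ℚ)*(1/k) + 1/4) := by
        apply Finset.sum_congr rfl; intro j hj
        simp only [Finset.mem_Icc] at hj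
        rw [saw_lin k j hk hj.1 hj.2]; field_simp; ring
    _ = ((k:ℚ)-1)*((k:ℚ)-2)/(12*k) := by
        rw [Finset.sum_add_distrib, Finset.sum_sub_distrib, ← Finset.sum_mul, ← Finset.sum_mul,
          sum_id (k-1) (by omega), sum_sq (k-1) (by omega), Finset.sum_const]
        rw [Int.card_Icc, show (k-1+1-1) = k-1 by ring]
        rw [nsmul_eq_mul, show (((k-1).toNat : ℚ)) = (k:ℚ) - 1 by
          rw [show ((k-1).toNat : ℚ) = (((k-1).toNat : ℤ) : ℚ) by push_cast; ring,
            Int.toNat_of_nonneg (by omega)]; push_cast; ring]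
        push_cast
        field_simp
        ring

lemma poly_sum (n : ℤ) (hn : 0 ≤ n) (A B C : ℚ) :
    ∑ j ∈ Finset.Icc (1:ℤ) n, (A*(j:ℚ)^2 + B*(j:ℚ) + C)
      = A*((n:ℚ)*(n+1)*(2*n+1)/6) + B*((n:ℚ)*(n+1)/2) + C*(n:ℚ) := by
  rw [Finset.sum_add_distrib, Finset.sum_add_distrib, ← Finset.mul_sum, ← Finset.mul_sum,
    sum_id n hn, sum_sq n hn, Finset.sum_const, Int.card_Icc,
    show (n+1-1) = n by ring, nsmul_eq_mul,
    show ((n.toNat : ℚ)) = (n:ℚ) by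
      rw [show (n.toNat : ℚ) = ((n.toNat : ℤ) : ℚ) by push_cast; ring, Int.toNat_of_nonneg hn]]
  ring

lemma sum_two (k : ℤ) (hk : 0 < k) (hko : Odd k) :
    ∑ j ∈ Finset.Icc (1:ℤ) (k-1), saw (((2*j:ℤ):ℚ)/(k:ℚ)) * saw ((j:ℚ)/(k:ℚ))
      = ((k:ℚ)-1)*((k:ℚ)-5)/(24*k) := by
  obtain ⟨K, hK⟩ := hko
  have hK0 : 0 ≤ K := by omega
  have hkq : (k:ℚ) ≠ 0 := Int.cast_ne_zero.mpr (by omega)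
  have hKq : (K:ℚ) = ((k:ℚ)-1)/2 := by
    have : ((k:ℤ):ℚ) = 2*(K:ℚ)+1 := by exact_mod_cast congrArg (Int.cast : ℤ → ℚ) hK
    linarith
  have hco2 : IsCoprime (2:ℤ) k := ⟨-K, 1, by rw [hK]; ring⟩
  have e0 : ∀ n:ℤ, Finset.Ioc (0:ℤ) n = Finset.Icc 1 n := by
    intro n; ext x; simp only [Finset.mem_Ioc, Finset.mem_Icc]; omega
  have hsets : Finset.Icc (1:ℤ) (k-1) = Finset.Icc 1 K ∪ Finset.Ioc K (k-1) := by
    ext x; simp only [Finset.mem_Icc, Finset.mem_Ioc, Finset.mem_union]; omega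
  have hdisj : Disjoint (Finset.Icc (1:ℤ) K) (Finset.Ioc K (k-1)) := by
    rw [Finset.disjoint_left]
    intro x hx hx2
    simp only [Finset.mem_Icc, Finset.mem_Ioc] at hx hx2
    omega
  have split : ∀ F : ℤ → ℚ, (∑ j ∈ Finset.Icc (1:ℤ) K, F j) + ∑ j ∈ Finset.Ioc K (k-1), F j
      = ∑ j ∈ Finset.Icc (1:ℤ) (k-1), F j := by
    intro F; rw [hsets, Finset.sum_union hdisj]
  -- saw values
  have hg : ∀ j, 1 ≤ j → j ≤ k-1 → saw ((j:ℚ)/(k:ℚ)) = (j:ℚ)/k - 1/2 := fun j h1 h2 => saw_lin k j hk h1 h2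
  have hni2 : ∀ j, 1 ≤ j → j ≤ k-1 → ((2*j:ℤ):ℚ)/(k:ℚ) ≠ (⌊((2*j:ℤ):ℚ)/(k:ℚ)⌋:ℚ) :=
    fun j h1 h2 => nonint_mul k 2 j hk hco2 h1 h2
  have low : ∀ j, 1 ≤ j → j ≤ K → saw (((2*j:ℤ):ℚ)/(k:ℚ)) = 2*(j:ℚ)/k - 1/2 := by
    intro j h1 h2
    rw [saw_eq _ (hni2 j h1 (by omega))]
    have hfl : ⌊((2*j:ℤ):ℚ)/(k:ℚ)⌋ = 0 := by
      rw [Int.floor_eq_zero_iff]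
      constructor
      · apply div_nonneg
        · exact_mod_cast (by omega : (0:ℤ) ≤ 2*j)
        · exact_mod_cast (by omega : (0:ℤ) ≤ k)
      · rw [div_lt_one (by exact_mod_cast hk)]
        exact_mod_cast (by omega : 2*j < k)
    rw [hfl]; push_cast; ring
  have high : ∀ j, K+1 ≤ j → j ≤ k-1 → saw (((2*j:ℤ):ℚ)/(k:ℚ)) = 2*(j:ℚ)/k - 3/2 := by
    intro j h1 h2
    rw [saw_eq _ (hni2 j (by omega) h2)]
    have hfl : ⌊((2*j:ℤ):ℚ)/(k:ℚ)⌋ = 1 := by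
      rw [Int.floor_eq_iff]
      constructor
      · rw [le_div_iff₀ (by exact_mod_cast hk)]
        push_cast
        have : ((k:ℤ):ℚ) ≤ ((2*j:ℤ):ℚ) := by exact_mod_cast (by omega : k ≤ 2*j)
        push_cast at this ⊢
        linarith
      · rw [div_lt_iff₀ (by exact_mod_cast hk)]
        exact_mod_cast (by omega : 2*j < 2*k)
    rw [hfl]; push_cast; ring
  rw [← split (fun j => saw (((2*j:ℤ):ℚ)/(k:ℚ)) * saw ((j:ℚ)/(k:ℚ)))]
  have p1 : ∑ j ∈ Finset.Icc (1:ℤ) K, saw (((2*j:ℤ):ℚ)/(k:ℚ)) * saw ((j:ℚ)/(k:ℚ))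
      = ∑ j ∈ Finset.Icc (1:ℤ) K, ((2/(k:ℚ)^2)*(j:ℚ)^2 + (-3/(2*k))*(j:ℚ) + 1/4) := by
    apply Finset.sum_congr rfl
    intro j hj
    simp only [Finset.mem_Icc] at hj
    rw [low j hj.1 hj.2, hg j hj.1 (by omega)]
    field_simp; ring
  have p2 : ∑ j ∈ Finset.Ioc K (k-1), saw (((2*j:ℤ):ℚ)/(k:ℚ)) * saw ((j:ℚ)/(k:ℚ))
      = ∑ j ∈ Finset.Ioc K (k-1), ((2/(k:ℚ)^2)*(j:ℚ)^2 + (-5/(2*k))*(j:ℚ) + 3/4) := by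
    apply Finset.sum_congr rfl
    intro j hj
    simp only [Finset.mem_Ioc] at hj
    rw [high j (by omega) hj.2, hg j (by omega) hj.2]
    field_simp; ring
  have p3 : ∑ j ∈ Finset.Ioc K (k-1), ((2/(k:ℚ)^2)*(j:ℚ)^2 + (-5/(2*k))*(j:ℚ) + 3/4)
      = (∑ j ∈ Finset.Icc (1:ℤ) (k-1), ((2/(k:ℚ)^2)*(j:ℚ)^2 + (-5/(2*k))*(j:ℚ) + 3/4))
        - ∑ j ∈ Finset.Icc (1:ℤ) K, ((2/(k:ℚ)^2)*(j:ℚ)^2 + (-5/(2*k))*(j:ℚ) + 3/4) := by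
    rw [← split (fun j => (2/(k:ℚ)^2)*(j:ℚ)^2 + (-5/(2*k))*(j:ℚ) + 3/4)]
    ring
  rw [p1, p2, p3, poly_sum K hK0, poly_sum (k-1) (by omega), poly_sum K hK0]
  push_cast
  rw [hKq]
  field_simp
  ring

lemma saw_double_frac (k a j : ℤ) (hk : 0 < k) (h2a : IsCoprime (2*a) k) (h1 : 1 ≤ j) (h2 : j ≤ k-1) :
    saw (((2*a*j:ℤ):ℚ)/(k:ℚ)) = saw (((a*j:ℤ):ℚ)/(k:ℚ)) + saw (((a*j:ℤ):ℚ)/(k:ℚ) + 1/2) := by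
  have hni := nonint_mul k (2*a) j hk h2a h1 h2
  have e : ((2*a*j:ℤ):ℚ)/(k:ℚ) = 2*(((a*j:ℤ):ℚ)/(k:ℚ)) := by push_cast; ring
  rw [e] at hni ⊢
  exact saw_double _ hni

lemma saw_double_frac1 (k j : ℤ) (hk : 0 < k) (hco2 : IsCoprime (2:ℤ) k) (h1 : 1 ≤ j) (h2 : j ≤ k-1) :
    saw (((2*j:ℤ):ℚ)/(k:ℚ)) = saw ((j:ℚ)/(k:ℚ)) + saw ((j:ℚ)/(k:ℚ) + 1/2) := by
  have := saw_double_frac k 1 j hk (by rwa [mul_one]) h1 h2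
  rw [show (2*1*j : ℤ) = 2*j by ring, show (1*j : ℤ) = j by ring] at this
  exact this

lemma ded_two_left (h k : ℤ) (hk : 0 < k) (hco : IsCoprime h k) (hco2 : IsCoprime (2:ℤ) k) :
    dedekindS (2*h) k = dedekindS h k
      + ∑ j ∈ Finset.Icc (1:ℤ) (k-1), saw (((h*j:ℤ):ℚ)/(k:ℚ) + 1/2) * saw ((j:ℚ)/(k:ℚ)) := by
  have h2h : IsCoprime (2*h) k := hco2.mul_left hco
  unfold dedekindS
  rw [← Finset.sum_add_distrib]
  apply Finset.sum_congr rfl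
  intro j hj
  simp only [Finset.mem_Icc] at hj
  rw [saw_double_frac k h j hk h2h hj.1 hj.2]
  ring

lemma sum_tg_eq (h k m : ℤ) (hk : 0 < k) (hco2 : IsCoprime (2:ℤ) k) (hm : 2*m = h + k) :
    ∑ j ∈ Finset.Icc (1:ℤ) (k-1), saw (((m*j:ℤ):ℚ)/(k:ℚ)) * saw ((j:ℚ)/(k:ℚ))
      = (∑ j ∈ Finset.Icc (1:ℤ) (k-1), saw (((h*j:ℤ):ℚ)/(k:ℚ)) * saw ((j:ℚ)/(k:ℚ)))
        + ∑ j ∈ Finset.Icc (1:ℤ) (k-1), saw (((h*j:ℤ):ℚ)/(k:ℚ)) * saw ((j:ℚ)/(k:ℚ) + 1/2) := by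
  have hkq : (k:ℚ) ≠ 0 := Int.cast_ne_zero.mpr (by omega)
  have hF : ∀ j : ℤ, saw (((m*(j+k):ℤ):ℚ)/(k:ℚ)) * saw (((j+k:ℤ):ℚ)/(k:ℚ))
      = saw (((m*j:ℤ):ℚ)/(k:ℚ)) * saw ((j:ℚ)/(k:ℚ)) := by
    intro j
    rw [show ((m*(j+k):ℤ):ℚ)/(k:ℚ) = ((m*j:ℤ):ℚ)/(k:ℚ) + ((m:ℤ):ℚ) by push_cast; field_simp,
      show ((j+k:ℤ):ℚ)/(k:ℚ) = ((j:ℤ):ℚ)/(k:ℚ) + ((1:ℤ):ℚ) by push_cast; field_simp,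
      saw_int_add, saw_int_add]
  have hre := sum_reindex k 2 hk hco2
    (fun j => saw (((m*j:ℤ):ℚ)/(k:ℚ)) * saw ((j:ℚ)/(k:ℚ))) (by intro j; exact_mod_cast hF j)
  rw [← hre, ← Finset.sum_add_distrib]
  apply Finset.sum_congr rfl
  intro j hj
  simp only [Finset.mem_Icc] at hj
  show saw (((m*(2*j):ℤ):ℚ)/(k:ℚ)) * saw (((2*j:ℤ):ℚ)/(k:ℚ)) = _
  rw [show ((m*(2*j):ℤ):ℚ)/(k:ℚ) = ((h*j:ℤ):ℚ)/(k:ℚ) + ((j:ℤ):ℚ) by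
      have hmq : (m:ℚ)*2 = (h:ℚ) + (k:ℚ) := by exact_mod_cast by linarith [hm]
      push_cast
      rw [div_add' _ _ _ hkq, div_eq_div_iff hkq hkq]
      linear_combination (j:ℚ)*(k:ℚ)*hmq,
    saw_int_add, saw_double_frac1 k j hk hco2 hj.1 hj.2]
  ring

lemma sum_ft_eq (h k m : ℤ) (hk : 0 < k) (hko : Odd k) (hm : 2*m = h + k) (hmk : IsCoprime m k) :
    ∑ j ∈ Finset.Icc (1:ℤ) (k-1), saw (((h*j:ℤ):ℚ)/(k:ℚ)) * saw (((m*j:ℤ):ℚ)/(k:ℚ))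
      = ((k:ℚ)-1)*((k:ℚ)-5)/(24*k) := by
  have hkq : (k:ℚ) ≠ 0 := Int.cast_ne_zero.mpr (by omega)
  have hF : ∀ j : ℤ, saw (((2*(j+k):ℤ):ℚ)/(k:ℚ)) * saw (((j+k:ℤ):ℚ)/(k:ℚ))
      = saw (((2*j:ℤ):ℚ)/(k:ℚ)) * saw ((j:ℚ)/(k:ℚ)) := by
    intro j
    rw [show ((2*(j+k):ℤ):ℚ)/(k:ℚ) = ((2*j:ℤ):ℚ)/(k:ℚ) + ((2:ℤ):ℚ) by push_cast; field_simp,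
      show ((j+k:ℤ):ℚ)/(k:ℚ) = ((j:ℤ):ℚ)/(k:ℚ) + ((1:ℤ):ℚ) by push_cast; field_simp,
      saw_int_add, saw_int_add]
  have hre := sum_reindex k m hk hmk
    (fun j => saw (((2*j:ℤ):ℚ)/(k:ℚ)) * saw ((j:ℚ)/(k:ℚ))) (by intro j; exact_mod_cast hF j)
  rw [← sum_two k hk hko, ← hre]
  apply Finset.sum_congr rfl
  intro j hj
  simp only [Finset.mem_Icc] at hj
  show saw (((h*j:ℤ):ℚ)/(k:ℚ)) * saw (((m*j:ℤ):ℚ)/(k:ℚ))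
      = saw (((2*(m*j):ℤ):ℚ)/(k:ℚ)) * saw (((m*j:ℤ):ℚ)/(k:ℚ))
  rw [show ((2*(m*j):ℤ):ℚ)/(k:ℚ) = ((h*j:ℤ):ℚ)/(k:ℚ) + ((j:ℤ):ℚ) by
      have hmq : (m:ℚ)*2 = (h:ℚ) + (k:ℚ) := by exact_mod_cast by linarith [hm]
      push_cast
      rw [div_add' _ _ _ hkq, div_eq_div_iff hkq hkq]
      linear_combination (j:ℚ)*(k:ℚ)*hmq,
    saw_int_add]

lemma sum_fugv (h k : ℤ) (hk : 0 < k) (hco : IsCoprime h k) (hco2 : IsCoprime (2:ℤ) k) :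
    ∑ j ∈ Finset.Icc (1:ℤ) (k-1),
      (saw (((h*j:ℤ):ℚ)/(k:ℚ)) + saw (((h*j:ℤ):ℚ)/(k:ℚ) + 1/2))
        * (saw ((j:ℚ)/(k:ℚ)) + saw ((j:ℚ)/(k:ℚ) + 1/2))
      = dedekindS h k := by
  have hkq : (k:ℚ) ≠ 0 := Int.cast_ne_zero.mpr (by omega)
  have h2h : IsCoprime (2*h) k := hco2.mul_left hco
  have hF : ∀ j : ℤ, saw (((h*(j+k):ℤ):ℚ)/(k:ℚ)) * saw (((j+k:ℤ):ℚ)/(k:ℚ))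
      = saw (((h*j:ℤ):ℚ)/(k:ℚ)) * saw ((j:ℚ)/(k:ℚ)) := by
    intro j
    rw [show ((h*(j+k):ℤ):ℚ)/(k:ℚ) = ((h*j:ℤ):ℚ)/(k:ℚ) + ((h:ℤ):ℚ) by push_cast; field_simp,
      show ((j+k:ℤ):ℚ)/(k:ℚ) = ((j:ℤ):ℚ)/(k:ℚ) + ((1:ℤ):ℚ) by push_cast; field_simp,
      saw_int_add, saw_int_add]
  have hre := sum_reindex k 2 hk hco2
    (fun j => saw (((h*j:ℤ):ℚ)/(k:ℚ)) * saw ((j:ℚ)/(k:ℚ))) (by intro j; exact_mod_cast hF j)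
  rw [show dedekindS h k = ∑ j ∈ Finset.Icc (1:ℤ) (k-1),
      saw (((h*j:ℤ):ℚ)/(k:ℚ)) * saw ((j:ℚ)/(k:ℚ)) from rfl, ← hre]
  apply Finset.sum_congr rfl
  intro j hj
  simp only [Finset.mem_Icc] at hj
  show _ = saw (((h*(2*j):ℤ):ℚ)/(k:ℚ)) * saw (((2*j:ℤ):ℚ)/(k:ℚ))
  rw [show (h*(2*j):ℤ) = 2*h*j by ring, saw_double_frac k h j hk h2h hj.1 hj.2,
    saw_double_frac1 k j hk hco2 hj.1 hj.2]

lemma ded_two_right (h k : ℤ) (hk : 0 < k) (hco : IsCoprime h k) (hho : Odd h) (hko : Odd k) :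
    dedekindS h (2*k) = dedekindS h k
      + ∑ j ∈ Finset.Icc (1:ℤ) (k-1), saw (((h*j:ℤ):ℚ)/(k:ℚ) + 1/2) * saw ((j:ℚ)/(k:ℚ) + 1/2) := by
  obtain ⟨K, hK⟩ := hko
  obtain ⟨A, hA⟩ := hho
  have hkq : (k:ℚ) ≠ 0 := Int.cast_ne_zero.mpr (by omega)
  set G : ℤ → ℚ := fun j => saw (((h*j:ℤ):ℚ)/((2*k:ℤ):ℚ)) * saw (((j:ℤ):ℚ)/((2*k:ℤ):ℚ)) with hG
  have hGper : ∀ j, G (j + 2*k) = G j := by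
    intro j
    simp only [hG]
    rw [show ((h*(j+2*k):ℤ):ℚ)/((2*k:ℤ):ℚ) = ((h*j:ℤ):ℚ)/((2*k:ℤ):ℚ) + ((h:ℤ):ℚ) by
        push_cast; field_simp,
      show ((j+2*k:ℤ):ℚ)/((2*k:ℤ):ℚ) = ((j:ℤ):ℚ)/((2*k:ℤ):ℚ) + ((1:ℤ):ℚ) by
        push_cast; field_simp,
      saw_int_add, saw_int_add]
  have hG0 : G 0 = 0 := by
    simp only [hG]
    norm_num [saw_zero]
  have hGk : G k = 0 := by
    simp only [hG]
    rw [show ((k:ℤ):ℚ)/((2*k:ℤ):ℚ) = (1/2 : ℚ) by push_cast; field_simp, saw_half]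
    ring
  have step1 : dedekindS h (2*k) = ∑ j ∈ Finset.Ico (0:ℤ) (2*k), G j := by
    rw [show Finset.Ico (0:ℤ) (2*k) = insert 0 (Finset.Icc 1 (2*k-1)) by
        ext x; simp only [Finset.mem_Ico, Finset.mem_insert, Finset.mem_Icc]; omega,
      Finset.sum_insert (by simp), hG0]
    unfold dedekindS
    rw [zero_add]
  have step2 : (∑ j ∈ (Finset.Ico (0:ℤ) (2*k)).filter (fun x => x % 2 = 0), G j)
      + ∑ j ∈ (Finset.Ico (0:ℤ) (2*k)).filter (fun x => ¬ (x % 2 = 0)), G j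
      = ∑ j ∈ Finset.Ico (0:ℤ) (2*k), G j :=
    Finset.sum_filter_add_sum_filter_not _ _ _
  have step3 : ∑ j ∈ (Finset.Ico (0:ℤ) (2*k)).filter (fun x => x % 2 = 0), G j
      = ∑ i ∈ Finset.Ico (0:ℤ) k, G (2*i) := by
    apply Finset.sum_nbij' (i := fun x => x/2) (j := fun i => 2*i)
    · intro x hx; simp only [Finset.mem_filter, Finset.mem_Ico] at *; omega
    · intro x hx; simp only [Finset.mem_filter, Finset.mem_Ico] at *; omega
    · intro x hx; simp only [Finset.mem_filter, Finset.mem_Ico] at hx; omega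
    · intro x _; omega
    · intro x hx
      simp only [Finset.mem_filter, Finset.mem_Ico] at hx
      rw [show 2*(x/2) = x by omega]
  have step4 : ∑ j ∈ (Finset.Ico (0:ℤ) (2*k)).filter (fun x => ¬ (x % 2 = 0)), G j
      = ∑ i ∈ Finset.Ico (0:ℤ) k, G (2*i+1) := by
    apply Finset.sum_nbij' (i := fun x => x/2) (j := fun i => 2*i+1)
    · intro x hx; simp only [Finset.mem_filter, Finset.mem_Ico] at *; omega
    · intro x hx; simp only [Finset.mem_filter, Finset.mem_Ico] at *; omega
    · intro x hx; simp only [Finset.mem_filter, Finset.mem_Ico] at hx; omega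
    · intro x _; omega
    · intro x hx
      simp only [Finset.mem_filter, Finset.mem_Ico] at hx
      rw [show 2*(x/2)+1 = x by omega]
  have hHper : ∀ i, (fun i => G (2*i + k)) (i + k) = (fun i => G (2*i + k)) i := by
    intro i
    simp only
    rw [show 2*(i+k) + k = (2*i+k) + 2*k by ring, hGper]
  have step5 : ∑ i ∈ Finset.Ico (0:ℤ) k, G (2*i+1) = ∑ i ∈ Finset.Ico (0:ℤ) k, G (2*i+k) := by
    have e1 : ∑ i ∈ Finset.Ico (0:ℤ) k, G (2*i+1)
        = ∑ i ∈ Finset.Ico (-K) (-K+k), G (2*i + k) := by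
      apply Finset.sum_nbij' (i := fun x => x - K) (j := fun x => x + K)
      · intro x hx; simp only [Finset.mem_Ico] at *; omega
      · intro x hx; simp only [Finset.mem_Ico] at *; omega
      · intro x _; omega
      · intro x _; omega
      · intro x _
        rw [show 2*(x - K) + k = 2*x + 1 by omega]
    rw [e1]
    exact sum_shift k hk (fun i => G (2*i + k)) hHper (-K)
  have step6 : ∑ i ∈ Finset.Ico (0:ℤ) k, G (2*i)
      = ∑ i ∈ Finset.Icc (1:ℤ) (k-1), G (2*i) := by
    rw [show Finset.Ico (0:ℤ) k = insert 0 (Finset.Icc 1 (k-1)) by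
        ext x; simp only [Finset.mem_Ico, Finset.mem_insert, Finset.mem_Icc]; omega,
      Finset.sum_insert (by simp), show G (2*0) = 0 by rw [show (2*0 : ℤ) = 0 by ring]; exact hG0,
      zero_add]
  have step7 : ∑ i ∈ Finset.Ico (0:ℤ) k, G (2*i+k)
      = ∑ i ∈ Finset.Icc (1:ℤ) (k-1), G (2*i+k) := by
    rw [show Finset.Ico (0:ℤ) k = insert 0 (Finset.Icc 1 (k-1)) by
        ext x; simp only [Finset.mem_Ico, Finset.mem_insert, Finset.mem_Icc]; omega,
      Finset.sum_insert (by simp), show G (2*0+k) = 0 by rw [show (2*0+k : ℤ) = k by ring]; exact hGk,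
      zero_add]
  have ptw1 : ∀ j ∈ Finset.Icc (1:ℤ) (k-1),
      G (2*j) = saw (((h*j:ℤ):ℚ)/(k:ℚ)) * saw ((j:ℚ)/(k:ℚ)) := by
    intro j _
    simp only [hG]
    rw [show ((h*(2*j):ℤ):ℚ)/((2*k:ℤ):ℚ) = ((h*j:ℤ):ℚ)/((k:ℚ)) by push_cast; field_simp,
      show ((2*j:ℤ):ℚ)/((2*k:ℤ):ℚ) = ((j:ℤ):ℚ)/((k:ℚ)) by push_cast; field_simp]
  have ptw2 : ∀ j ∈ Finset.Icc (1:ℤ) (k-1),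
      G (2*j+k) = saw (((h*j:ℤ):ℚ)/(k:ℚ) + 1/2) * saw ((j:ℚ)/(k:ℚ) + 1/2) := by
    intro j _
    simp only [hG]
    have hAq : (h:ℚ) = 2*(A:ℚ)+1 := by exact_mod_cast hA
    rw [show ((h*(2*j+k):ℤ):ℚ)/((2*k:ℤ):ℚ) = (((h*j:ℤ):ℚ)/(k:ℚ) + 1/2) + ((A:ℤ):ℚ) by
        push_cast; field_simp; linear_combination (k:ℚ)*hAq,
      show ((2*j+k:ℤ):ℚ)/((2*k:ℤ):ℚ) = ((j:ℤ):ℚ)/(k:ℚ) + 1/2 by push_cast; field_simp,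
      saw_int_add]
  rw [step1, ← step2, step3, step4, step5, step6, step7,
    Finset.sum_congr rfl ptw1, Finset.sum_congr rfl ptw2]
  rfl

lemma parity_term (h k m j : ℤ) (hk : 0 < k) (hm : 2*m = h + k)
    (hco : IsCoprime h k) (hmk : IsCoprime m k) (h1 : 1 ≤ j) (h2 : j ≤ k-1) :
    (-1 : ℚ) ^ (j + ⌊((h * j : ℤ) : ℚ) / (k : ℚ)⌋) * (⌊((h * j : ℤ) : ℚ) / (k : ℚ)⌋ : ℚ)
      = (2*saw (((h*j:ℤ):ℚ)/(k:ℚ)) - 4*saw (((m*j:ℤ):ℚ)/(k:ℚ)))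
        * ((h:ℚ)*saw ((j:ℚ)/(k:ℚ)) + ((h:ℚ)-1)/2 - saw (((h*j:ℤ):ℚ)/(k:ℚ))) := by
  have hkq : (k:ℚ) ≠ 0 := Int.cast_ne_zero.mpr (by omega)
  set x : ℚ := ((h*j:ℤ):ℚ)/(k:ℚ) with hxdef
  set y : ℚ := ((m*j:ℤ):ℚ)/(k:ℚ) with hydef
  have hnx : x ≠ (⌊x⌋:ℚ) := nonint_mul k h j hk hco h1 h2
  have hny : y ≠ (⌊y⌋:ℚ) := nonint_mul k m j hk hmk h1 h2
  have hmq : 2*(m:ℚ) = (h:ℚ) + (k:ℚ) := by exact_mod_cast hm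
  have e2y : 2*y = x + ((j:ℤ):ℚ) := by
    rw [hxdef, hydef]
    push_cast
    field_simp
    linear_combination hmq
  have fl2y : ⌊2*y⌋ = ⌊x⌋ + j := by rw [e2y]; exact Int.floor_add_intCast x j
  have hn2y : 2*y ≠ (⌊2*y⌋:ℚ) := by
    rw [e2y, Int.floor_add_intCast]
    push_cast
    intro hc
    apply hnx
    linarith
  have saw2y : saw (2*y) = saw x := by rw [e2y, saw_int_add]
  have b1 : (2*⌊y⌋ : ℤ) ≤ ⌊2*y⌋ := Int.le_floor.mpr (by push_cast; linarith [Int.floor_le y])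
  have b2 : ⌊2*y⌋ < 2*⌊y⌋ + 2 := Int.floor_lt.mpr (by push_cast; linarith [Int.lt_floor_add_one y])
  have sg : saw ((j:ℚ)/(k:ℚ)) = (j:ℚ)/k - 1/2 := saw_lin k j hk h1 h2
  have s2 : saw x = 2*y - (⌊2*y⌋:ℚ) - 1/2 := by rw [← saw2y, saw_eq _ hn2y]
  have pw : (-1 : ℚ) ^ (j + ⌊x⌋) = 1 - 2*((⌊2*y⌋:ℚ) - 2*(⌊y⌋:ℚ)) := by
    have e : j + ⌊x⌋ = ⌊2*y⌋ := by omega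
    rw [e]
    rcases (by omega : ⌊2*y⌋ = 2*⌊y⌋ ∨ ⌊2*y⌋ = 2*⌊y⌋+1) with hd | hd
    · rw [hd, zpow_mul]
      push_cast
      norm_num
    · rw [hd, zpow_add₀ (show (-1:ℚ) ≠ 0 by norm_num), zpow_mul]
      push_cast
      norm_num
  have f1 : 2*saw x - 4*saw y = 1 - 2*((⌊2*y⌋:ℚ) - 2*(⌊y⌋:ℚ)) := by
    rw [s2, saw_eq _ hny]
    ring
  have f2 : (h:ℚ)*saw ((j:ℚ)/(k:ℚ)) + ((h:ℚ)-1)/2 - saw x = (⌊x⌋:ℚ) := by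
    rw [sg, s2]
    have e3 : x = (h:ℚ)*(j:ℚ)/(k:ℚ) := by rw [hxdef]; push_cast; ring
    have e4 : (⌊2*y⌋:ℚ) = (⌊x⌋:ℚ) + (j:ℚ) := by exact_mod_cast congrArg (Int.cast : ℤ → ℚ) fl2y
    rw [e4, e2y, e3]
    push_cast
    ring
  rw [f1, f2, pw]

theorem stmt_9 (h k : ℤ) (hh : 0 < h) (hk : 0 < k) (hco : IsCoprime h k)
    (hho : Odd h) (hko : Odd k) :
    B1 h k = -10 * (h : ℚ) * dedekindS h k + 4 * (h : ℚ) * dedekindS (2 * h) k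
      + 4 * (h : ℚ) * dedekindS h (2 * k) + 1 / (2 * (k : ℚ)) - 1 / 2 := by
  obtain ⟨A, hA⟩ := hho
  obtain ⟨K, hK⟩ := hko
  have hkq : (k:ℚ) ≠ 0 := Int.cast_ne_zero.mpr (by omega)
  have hco2 : IsCoprime (2:ℤ) k := ⟨-K, 1, by rw [hK]; ring⟩
  set m : ℤ := A + K + 1 with hm0
  have hm : 2*m = h + k := by omega
  have hmk : IsCoprime m k := by
    have h1 : IsCoprime (h + k*1) k := IsCoprime.add_mul_left_left hco 1
    rw [mul_one, ← hm] at h1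
    exact IsCoprime.of_mul_left_right h1
  -- named sums
  have Hf0 : ∑ j ∈ Finset.Icc (1:ℤ) (k-1), saw (((h*j:ℤ):ℚ)/(k:ℚ)) = 0 := sum_saw_zero k h hk
  have Ht0 : ∑ j ∈ Finset.Icc (1:ℤ) (k-1), saw (((m*j:ℤ):ℚ)/(k:ℚ)) = 0 := sum_saw_zero k m hk
  have Hff := sum_saw_sq k h hk hco
  have Hft := sum_ft_eq h k m hk ⟨K, hK⟩ hm hmk
  have Htg := sum_tg_eq h k m hk hco2 hm
  have H2l := ded_two_left h k hk hco hco2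
  have H2r := ded_two_right h k hk hco ⟨A, hA⟩ ⟨K, hK⟩
  have Hz := sum_fugv h k hk hco hco2
  have hded : dedekindS h k
      = ∑ j ∈ Finset.Icc (1:ℤ) (k-1), saw (((h*j:ℤ):ℚ)/(k:ℚ)) * saw ((j:ℚ)/(k:ℚ)) := rfl
  -- expand Hz into four sums
  have Hz' : (∑ j ∈ Finset.Icc (1:ℤ) (k-1), saw (((h*j:ℤ):ℚ)/(k:ℚ)) * saw ((j:ℚ)/(k:ℚ)))
      + (∑ j ∈ Finset.Icc (1:ℤ) (k-1), saw (((h*j:ℤ):ℚ)/(k:ℚ)) * saw ((j:ℚ)/(k:ℚ) + 1/2))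
      + (∑ j ∈ Finset.Icc (1:ℤ) (k-1), saw (((h*j:ℤ):ℚ)/(k:ℚ) + 1/2) * saw ((j:ℚ)/(k:ℚ)))
      + (∑ j ∈ Finset.Icc (1:ℤ) (k-1), saw (((h*j:ℤ):ℚ)/(k:ℚ) + 1/2) * saw ((j:ℚ)/(k:ℚ) + 1/2))
      = dedekindS h k := by
    rw [← Hz]
    rw [← Finset.sum_add_distrib, ← Finset.sum_add_distrib, ← Finset.sum_add_distrib]
    apply Finset.sum_congr rfl
    intro j _
    ring
  -- B1 expansion
  have HB : B1 h k = ∑ j ∈ Finset.Icc (1:ℤ) (k-1),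
      (2*saw (((h*j:ℤ):ℚ)/(k:ℚ)) - 4*saw (((m*j:ℤ):ℚ)/(k:ℚ)))
        * ((h:ℚ)*saw ((j:ℚ)/(k:ℚ)) + ((h:ℚ)-1)/2 - saw (((h*j:ℤ):ℚ)/(k:ℚ))) := by
    apply Finset.sum_congr rfl
    intro j hj
    simp only [Finset.mem_Icc] at hj
    exact parity_term h k m j hk hm hco hmk hj.1 hj.2
  have HBx : B1 h k
      = 2*(h:ℚ)*(∑ j ∈ Finset.Icc (1:ℤ) (k-1), saw (((h*j:ℤ):ℚ)/(k:ℚ)) * saw ((j:ℚ)/(k:ℚ)))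
        + ((h:ℚ)-1)*(∑ j ∈ Finset.Icc (1:ℤ) (k-1), saw (((h*j:ℤ):ℚ)/(k:ℚ)))
        - 2*(∑ j ∈ Finset.Icc (1:ℤ) (k-1), (saw (((h*j:ℤ):ℚ)/(k:ℚ)))^2)
        - 4*(h:ℚ)*(∑ j ∈ Finset.Icc (1:ℤ) (k-1), saw (((m*j:ℤ):ℚ)/(k:ℚ)) * saw ((j:ℚ)/(k:ℚ)))
        - 2*((h:ℚ)-1)*(∑ j ∈ Finset.Icc (1:ℤ) (k-1), saw (((m*j:ℤ):ℚ)/(k:ℚ)))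
        + 4*(∑ j ∈ Finset.Icc (1:ℤ) (k-1), saw (((h*j:ℤ):ℚ)/(k:ℚ)) * saw (((m*j:ℤ):ℚ)/(k:ℚ))) := by
    rw [HB]
    have e : ∀ j ∈ Finset.Icc (1:ℤ) (k-1),
        (2*saw (((h*j:ℤ):ℚ)/(k:ℚ)) - 4*saw (((m*j:ℤ):ℚ)/(k:ℚ)))
          * ((h:ℚ)*saw ((j:ℚ)/(k:ℚ)) + ((h:ℚ)-1)/2 - saw (((h*j:ℤ):ℚ)/(k:ℚ)))
        = 2*(h:ℚ)*(saw (((h*j:ℤ):ℚ)/(k:ℚ)) * saw ((j:ℚ)/(k:ℚ)))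
          + (((h:ℚ)-1)*saw (((h*j:ℤ):ℚ)/(k:ℚ))
          + ((-2)*(saw (((h*j:ℤ):ℚ)/(k:ℚ)))^2
          + ((-4*(h:ℚ))*(saw (((m*j:ℤ):ℚ)/(k:ℚ)) * saw ((j:ℚ)/(k:ℚ)))
          + ((-2*((h:ℚ)-1))*saw (((m*j:ℤ):ℚ)/(k:ℚ))
          + 4*(saw (((h*j:ℤ):ℚ)/(k:ℚ)) * saw (((m*j:ℤ):ℚ)/(k:ℚ))))))) := by
      intro j _
      ring
    rw [Finset.sum_congr rfl e]
    simp only [Finset.sum_add_distrib, ← Finset.mul_sum]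
    ring
  -- final assembly
  rw [HBx, Hf0, Ht0, Hff, Hft, Htg, H2l, H2r, hded]
  have Hfv : ∑ j ∈ Finset.Icc (1:ℤ) (k-1), saw (((h*j:ℤ):ℚ)/(k:ℚ)) * saw ((j:ℚ)/(k:ℚ) + 1/2)
      = -((∑ j ∈ Finset.Icc (1:ℤ) (k-1), saw (((h*j:ℤ):ℚ)/(k:ℚ) + 1/2) * saw ((j:ℚ)/(k:ℚ)))
        + (∑ j ∈ Finset.Icc (1:ℤ) (k-1), saw (((h*j:ℤ):ℚ)/(k:ℚ) + 1/2) * saw ((j:ℚ)/(k:ℚ) + 1/2))) := by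
    rw [hded] at Hz'
    linarith [Hz']
  rw [Hfv]
  field_simp
  ring
end

section
/- Let n be a positive natural number and set h = F_{6n-1} and k = F_{6n+1}, where F_m is the m-th Fibonacci number. Then k·B₁(h,k) + h·B₁(k,h) = (h² - h - k + k²)/2 - hk + 1. -/
open Finset
section
def S (m : ℤ) : ℚ := if Even m then 1 else -1

lemma zpow_neg_one_eq_S (m : ℤ) : (-1 : ℚ) ^ m = S m := by
  rcases Int.even_or_odd m with hm | hm
  · rw [hm.neg_one_zpow, S, if_pos hm]
  · rw [hm.neg_one_zpow, S, if_neg (by simpa [Int.even_iff, Int.odd_iff] using hm)]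

lemma S_congr {a b : ℤ} (hab : Even (a - b)) : S a = S b := by
  unfold S
  rw [Int.even_sub] at hab
  by_cases h : Even b
  · rw [if_pos (hab.mpr h), if_pos h]
  · rw [if_neg (fun h' => h (hab.mp h')), if_neg h]

lemma S_natCast (n : ℕ) : S (n : ℤ) = (-1 : ℚ) ^ n := by
  unfold S
  by_cases h : Even n
  · rw [if_pos (by exact_mod_cast h.natCast), h.neg_one_pow]
  · rw [if_neg (by rwa [Int.even_coe_nat]), (Nat.not_even_iff_odd.mp h).neg_one_pow]

lemma sum_Icc_int (F : ℤ → ℚ) (n : ℕ) :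
    ∑ j ∈ Icc (1 : ℤ) (n : ℤ), F j = ∑ j ∈ range n, F ((j : ℤ) + 1) := by
  induction n with
  | zero => simp
  | succ n ih =>
    have h1 : Icc (1 : ℤ) ((n + 1 : ℕ) : ℤ) = insert ((n : ℤ) + 1) (Icc (1 : ℤ) (n : ℤ)) := by
      ext x
      simp only [Finset.mem_Icc, Finset.mem_insert]
      push_cast
      omega
    rw [h1, Finset.sum_insert (by simp), ih, Finset.sum_range_succ, add_comm]

lemma alt_sum_range (n : ℕ) :
    ∑ i ∈ range n, (-1 : ℚ) ^ i = if Even n then 0 else 1 := by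
  induction n with
  | zero => simp
  | succ n ih =>
    rw [Finset.sum_range_succ, ih]
    by_cases h : Even n
    · rw [if_pos h, if_neg (by simp [Nat.even_add_one, h]), h.neg_one_pow]; ring
    · rw [if_neg h, if_pos (by simp [Nat.even_add_one, h]),
        (Nat.not_even_iff_odd.mp h).neg_one_pow]; ring

lemma alt_sum_range_mul (n : ℕ) :
    ∑ i ∈ range n, (-1 : ℚ) ^ i * i = if Even n then -(n : ℚ)/2 else ((n : ℚ)-1)/2 := by
  induction n with
  | zero => simp
  | succ n ih =>
    rw [Finset.sum_range_succ, ih]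
    by_cases h : Even n
    · rw [if_pos h, if_neg (by simp [Nat.even_add_one, h]), h.neg_one_pow]; push_cast; ring
    · rw [if_neg h, if_pos (by simp [Nat.even_add_one, h]),
        (Nat.not_even_iff_odd.mp h).neg_one_pow]; push_cast; ring
end

-- helper: congruent + in range → emod equals
lemma emod_eq_of_dvd_sub {h a b : ℤ} (hpos : 0 < h) (hdvd : h ∣ (a - b)) (hb0 : 0 ≤ b)
    (hbh : b < h) : a % h = b := by
  have h1 : a % h = b % h := Int.emod_eq_emod_iff_emod_sub_eq_zero.mpr
    (Int.emod_eq_zero_of_dvd hdvd)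
  rw [h1, Int.emod_eq_of_lt hb0 hbh]

lemma reflect1 {h : ℤ} (hpos : 0 < h) {N : ℤ} (hN : h ∣ N) (m : ℤ) :
    (N - 1 - m) % h = h - 1 - m % h := by
  have h0 := Int.emod_nonneg m (ne_of_gt hpos)
  have h1 := Int.emod_lt_of_pos m hpos
  refine emod_eq_of_dvd_sub hpos ?_ (by omega) (by omega)
  have h2 : m % h = m - h * (m / h) := Int.emod_def m h
  obtain ⟨c, hc⟩ := hN
  exact ⟨c - 1 - m / h, by rw [h2]; rw [hc]; ring⟩

lemma reflect2 {h : ℤ} (hpos : 0 < h) {N : ℤ} (hN : h ∣ N) {m : ℤ} (hm : ¬ h ∣ m) :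
    (N - m) % h = h - m % h := by
  have h0 := Int.emod_nonneg m (ne_of_gt hpos)
  have h1 := Int.emod_lt_of_pos m hpos
  have hne : m % h ≠ 0 := fun hc => hm (Int.dvd_of_emod_eq_zero hc)
  refine emod_eq_of_dvd_sub hpos ?_ (by omega) (by omega)
  have h2 : m % h = m - h * (m / h) := Int.emod_def m h
  obtain ⟨c, hc⟩ := hN
  exact ⟨c - 1 - m / h, by rw [h2]; rw [hc]; ring⟩

-- affine permutation lemma
lemma sum_affine {h u v k : ℤ} (hk : 0 < k) (huv : u * h + v * k = 1) (a : ℤ) (F : ℤ → ℚ) :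
    ∑ q ∈ Icc (0 : ℤ) (k - 1), F ((h * q + a) % k) = ∑ c ∈ Icc (0 : ℤ) (k - 1), F c := by
  have hkne : k ≠ 0 := ne_of_gt hk
  refine Finset.sum_nbij' (fun q => (h * q + a) % k) (fun c => (u * (c - a)) % k) ?_ ?_ ?_ ?_ ?_
  · intro q _
    simp only [Finset.mem_Icc]
    exact ⟨Int.emod_nonneg _ hkne, by have := Int.emod_lt_of_pos (h * q + a) hk; omega⟩
  · intro c _
    simp only [Finset.mem_Icc]
    exact ⟨Int.emod_nonneg _ hkne, by have := Int.emod_lt_of_pos (u * (c - a)) hk; omega⟩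
  · intro q hq
    simp only [Finset.mem_Icc] at hq
    show (u * ((h * q + a) % k - a)) % k = q
    have h1 : (u * ((h * q + a) % k - a)) % k = (u * ((h * q + a) - a)) % k := by
      conv_lhs => rw [Int.mul_emod, Int.sub_emod, Int.emod_emod_of_dvd _ dvd_rfl,
        ← Int.sub_emod, ← Int.mul_emod]
    have h2 : (u * ((h * q + a) - a)) % k = q % k := by
      apply Int.emod_eq_emod_iff_emod_sub_eq_zero.mpr
      apply Int.emod_eq_zero_of_dvd
      exact ⟨-v * q, by linear_combination q * huv⟩
    rw [h1, h2, Int.emod_eq_of_lt hq.1 (by omega)]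
  · intro c hc
    simp only [Finset.mem_Icc] at hc
    show (h * ((u * (c - a)) % k) + a) % k = c
    have h1 : (h * ((u * (c - a)) % k) + a) % k = (h * (u * (c - a)) + a) % k := by
      conv_lhs => rw [Int.add_emod, Int.mul_emod, Int.emod_emod_of_dvd _ dvd_rfl,
        ← Int.mul_emod, ← Int.add_emod]
    have h2 : (h * (u * (c - a)) + a) % k = c % k := by
      apply Int.emod_eq_emod_iff_emod_sub_eq_zero.mpr
      apply Int.emod_eq_zero_of_dvd
      exact ⟨-v * (c - a), by linear_combination (c - a) * huv⟩
    rw [h1, h2, Int.emod_eq_of_lt hc.1 (by omega)]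
  · intro q _
    rfl

lemma Icc0_eq_insert {k : ℤ} (hk : 0 < k) :
    Icc (0 : ℤ) (k - 1) = insert (0 : ℤ) (Icc (1 : ℤ) (k - 1)) := by
  ext x; simp only [Finset.mem_Icc, Finset.mem_insert]; omega

lemma sum_perm {h u v k : ℤ} (hk : 0 < k) (huv : u * h + v * k = 1) (F : ℤ → ℚ) :
    ∑ j ∈ Icc (1 : ℤ) (k - 1), F ((h * j) % k) = ∑ c ∈ Icc (1 : ℤ) (k - 1), F c := by
  have h0 := sum_affine hk huv 0 F
  simp only [add_zero] at h0
  rw [Icc0_eq_insert hk] at h0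
  rw [Finset.sum_insert (by simp), Finset.sum_insert (by simp)] at h0
  simp only [mul_zero, Int.zero_emod] at h0
  linarith [h0]

lemma toNat_even {k : ℤ} (hk : 0 < k) (hko : Odd k) : Even (k - 1).toNat := by
  obtain ⟨t, ht⟩ := hko
  have h1 : (k - 1).toNat = (2 * t).toNat := by omega
  rw [h1]
  exact ⟨t.toNat, by omega⟩

lemma S_succ_natCast (j : ℕ) : S ((j : ℤ) + 1) = -(-1 : ℚ) ^ j := by
  have h1 : ((j : ℤ) + 1) = ((j + 1 : ℕ) : ℤ) := by push_cast; ring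
  rw [h1, S_natCast, pow_succ]; ring

lemma S_sum_Icc1 {k : ℤ} (hk : 0 < k) (hko : Odd k) :
    ∑ c ∈ Icc (1 : ℤ) (k - 1), S c = 0 := by
  have hcast : ((k - 1).toNat : ℤ) = k - 1 := by omega
  rw [← hcast, sum_Icc_int S ((k-1).toNat)]
  calc ∑ j ∈ range (k-1).toNat, S ((j : ℤ) + 1)
      = ∑ j ∈ range (k-1).toNat, -(-1 : ℚ) ^ j :=
        Finset.sum_congr rfl (fun j _ => S_succ_natCast j)
    _ = -∑ j ∈ range (k-1).toNat, (-1 : ℚ) ^ j := by rw [Finset.sum_neg_distrib]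
    _ = 0 := by rw [alt_sum_range, if_pos (toNat_even hk hko)]; ring

lemma S_sum_Icc0 {k : ℤ} (hk : 0 < k) (hko : Odd k) :
    ∑ c ∈ Icc (0 : ℤ) (k - 1), S c = 1 := by
  rw [Icc0_eq_insert hk, Finset.sum_insert (by simp), S_sum_Icc1 hk hko]
  simp [S]

lemma S_mul_sum_Icc1 {k : ℤ} (hk : 0 < k) (hko : Odd k) :
    ∑ c ∈ Icc (1 : ℤ) (k - 1), S c * (c : ℚ) = ((k : ℚ) - 1) / 2 := by
  have hcast : ((k - 1).toNat : ℤ) = k - 1 := by omega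
  have heven := toNat_even hk hko
  have hc2 : (((k - 1).toNat : ℕ) : ℚ) = (k : ℚ) - 1 := by exact_mod_cast congrArg (fun z : ℤ => (z : ℚ)) hcast
  rw [← hcast, sum_Icc_int (fun c => S c * (c : ℚ)) ((k-1).toNat)]
  calc ∑ j ∈ range (k-1).toNat, S ((j : ℤ) + 1) * (((j : ℤ) + 1 : ℤ) : ℚ)
      = ∑ j ∈ range (k-1).toNat, (-((-1 : ℚ) ^ j * j) - (-1 : ℚ) ^ j) := by
        refine Finset.sum_congr rfl (fun j _ => ?_)
        rw [S_succ_natCast j]; push_cast; ring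
    _ = -∑ j ∈ range (k-1).toNat, (-1 : ℚ) ^ j * j
        - ∑ j ∈ range (k-1).toNat, (-1 : ℚ) ^ j := by
        rw [Finset.sum_sub_distrib, Finset.sum_neg_distrib]
    _ = ((k : ℚ) - 1) / 2 := by
        rw [alt_sum_range, alt_sum_range_mul, if_pos heven, if_pos heven, hc2]
        ring


lemma floor_int_div {a k : ℤ} (hk : 0 < k) : ⌊((a : ℤ) : ℚ) / (k : ℚ)⌋ = a / k := by
  have hkt : ((k.toNat : ℕ) : ℤ) = k := Int.toNat_of_nonneg hk.le
  have h1 : ((k : ℤ) : ℚ) = ((k.toNat : ℕ) : ℚ) := by exact_mod_cast congrArg (fun z : ℤ => (z : ℚ)) hkt.symm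
  rw [h1, Rat.floor_intCast_div_natCast, hkt]

lemma kB1_eq {h k : ℤ} (hk : 0 < k) (hho : Odd h) (hko : Odd k) {u v : ℤ}
    (huv : u * h + v * k = 1) :
    (k : ℚ) * B1 h k
      = (∑ j ∈ Icc (1 : ℤ) (k - 1), S ((h * j) % k) * ((h * j : ℤ) : ℚ)) - ((k : ℚ) - 1) / 2 := by
  unfold B1
  rw [Finset.mul_sum]
  have key : ∀ j ∈ Icc (1 : ℤ) (k - 1),
      (k : ℚ) * ((-1 : ℚ) ^ (j + ⌊((h * j : ℤ) : ℚ) / (k : ℚ)⌋) * (⌊((h * j : ℤ) : ℚ) / (k : ℚ)⌋ : ℚ))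
      = S ((h * j) % k) * ((h * j : ℤ) : ℚ) - S ((h * j) % k) * (((h * j) % k : ℤ) : ℚ) := by
    intro j _
    rw [floor_int_div hk]
    set f := (h * j) / k with hf
    have hr : (h * j) % k = h * j - k * f := Int.emod_def (h * j) k
    have hpar : Even ((h * j) % k - (j + f)) := by
      obtain ⟨c, hc⟩ := hho
      obtain ⟨d, hd⟩ := hko
      exact ⟨c * j - d * f - f, by rw [hr, hc, hd]; ring⟩
    rw [zpow_neg_one_eq_S, ← S_congr hpar]
    have hcast : ((k : ℚ)) * (f : ℚ) = ((h * j : ℤ) : ℚ) - (((h * j) % k : ℤ) : ℚ) := by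
      have : ((h * j) % k : ℤ) = h * j - k * f := hr
      push_cast [this]
      ring
    calc (k : ℚ) * (S ((h * j) % k) * (f : ℚ))
        = S ((h * j) % k) * ((k : ℚ) * (f : ℚ)) := by ring
      _ = S ((h * j) % k) * ((h * j : ℤ) : ℚ) - S ((h * j) % k) * (((h * j) % k : ℤ) : ℚ) := by
          rw [hcast]; ring
  rw [Finset.sum_congr rfl key, Finset.sum_sub_distrib]
  congr 1
  rw [sum_perm hk huv (fun x => S x * (x : ℚ))]
  exact S_mul_sum_Icc1 hk hko

lemma S_add (a b : ℤ) : S (a + b) = S a * S b := by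
  by_cases ha : Even a <;> by_cases hb : Even b <;>
    simp [S, Int.even_add, ha, hb]

def eps (h k m : ℤ) : ℚ := S (m % h + m % k)

lemma eps_crt_sum {h k : ℤ} (hh : 0 < h) (hk : 0 < k) (hho : Odd h) (hko : Odd k)
    {u v : ℤ} (huv : u * h + v * k = 1) :
    ∑ m ∈ Icc (0 : ℤ) (h * k - 1), eps h k m = 1 := by
  have hhne : h ≠ 0 := ne_of_gt hh
  have step : ∑ m ∈ Icc (0 : ℤ) (h * k - 1), eps h k m
      = ∑ p ∈ (Icc (0 : ℤ) (k - 1)) ×ˢ (Icc (0 : ℤ) (h - 1)), eps h k (h * p.1 + p.2) := by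
    refine (Finset.sum_nbij' (fun p => h * p.1 + p.2) (fun m => (m / h, m % h)) ?_ ?_ ?_ ?_ ?_).symm
    · intro p hp
      simp only [Finset.mem_product, Finset.mem_Icc] at hp
      simp only [Finset.mem_Icc]
      constructor
      · nlinarith [hp.1.1, hp.2.1]
      · nlinarith [hp.1.2, hp.2.2]
    · intro m hm
      simp only [Finset.mem_Icc] at hm
      simp only [Finset.mem_product, Finset.mem_Icc]
      refine ⟨⟨Int.ediv_nonneg hm.1 hh.le, ?_⟩,
        Int.emod_nonneg m hhne, by have := Int.emod_lt_of_pos m hh; omega⟩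
      have : m / h < k := Int.ediv_lt_iff_lt_mul hh |>.mpr (by nlinarith [hm.2])
      omega
    · intro p hp
      simp only [Finset.mem_product, Finset.mem_Icc] at hp
      have h1 : (h * p.1 + p.2) / h = p.1 := by
        rw [add_comm, Int.add_mul_ediv_left p.2 p.1 hhne,
          Int.ediv_eq_zero_of_lt hp.2.1 (by omega)]
        ring
      have h2 : (h * p.1 + p.2) % h = p.2 := by
        rw [add_comm, Int.add_mul_emod_self_left, Int.emod_eq_of_lt hp.2.1 (by omega)]
      show ((h * p.1 + p.2) / h, (h * p.1 + p.2) % h) = p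
      rw [h1, h2]
    · intro m _
      exact Int.mul_ediv_add_emod m h
    · intro p _
      rfl
  rw [step, Finset.sum_product]
  have inner : ∀ q ∈ Icc (0 : ℤ) (k - 1), ∀ a ∈ Icc (0 : ℤ) (h - 1),
      eps h k (h * q + a) = S a * S ((h * q + a) % k) := by
    intro q _ a ha
    simp only [Finset.mem_Icc] at ha
    unfold eps
    rw [add_comm (h*q) a, Int.add_mul_emod_self_left, Int.emod_eq_of_lt ha.1 (by omega),
      add_comm a (h*q), S_add]
  calc ∑ q ∈ Icc (0 : ℤ) (k - 1), ∑ a ∈ Icc (0 : ℤ) (h - 1), eps h k (h * q + a)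
      = ∑ a ∈ Icc (0 : ℤ) (h - 1), ∑ q ∈ Icc (0 : ℤ) (k - 1), eps h k (h * q + a) :=
        Finset.sum_comm
    _ = ∑ a ∈ Icc (0 : ℤ) (h - 1), S a * (∑ q ∈ Icc (0 : ℤ) (k - 1), S ((h * q + a) % k)) := by
        refine Finset.sum_congr rfl (fun a ha => ?_)
        rw [Finset.mul_sum]
        exact Finset.sum_congr rfl (fun q hq => inner q hq a ha)
    _ = ∑ a ∈ Icc (0 : ℤ) (h - 1), S a * 1 := by
        refine Finset.sum_congr rfl (fun a _ => ?_)
        rw [sum_affine hk huv a S, S_sum_Icc0 hk hko]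
    _ = 1 := by
        simp only [mul_one]
        exact S_sum_Icc0 hh hho

lemma eps_reflect1 {h k : ℤ} (hh : 0 < h) (hk : 0 < k) (hho : Odd h) (hko : Odd k) (m : ℤ) :
    eps h k (h * k - 1 - m) = eps h k m := by
  unfold eps
  rw [reflect1 hh ⟨k, rfl⟩ m, reflect1 hk ⟨h, mul_comm h k⟩ m]
  apply S_congr
  obtain ⟨c, hc⟩ := hho
  obtain ⟨d, hd⟩ := hko
  exact ⟨c + d - m % h - m % k, by rw [hc, hd]; ring⟩

lemma eps_full_weighted {h k : ℤ} (hh : 0 < h) (hk : 0 < k) (hho : Odd h) (hko : Odd k)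
    {u v : ℤ} (huv : u * h + v * k = 1) :
    ∑ m ∈ Icc (0 : ℤ) (h * k - 1), eps h k m * (m : ℚ) = (((h : ℚ) * k) - 1) / 2 := by
  have hrev : ∑ m ∈ Icc (0 : ℤ) (h * k - 1), eps h k m * ((h * k - 1 - m : ℤ) : ℚ)
      = ∑ m ∈ Icc (0 : ℤ) (h * k - 1), eps h k m * (m : ℚ) := by
    refine Finset.sum_nbij' (fun m => h * k - 1 - m) (fun m => h * k - 1 - m) ?_ ?_ ?_ ?_ ?_
    · intro m hm; simp only [Finset.mem_Icc] at hm ⊢; omega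
    · intro m hm; simp only [Finset.mem_Icc] at hm ⊢; omega
    · intro m _; ring
    · intro m _; ring
    · intro m _
      show eps h k m * ((h * k - 1 - m : ℤ) : ℚ)
          = eps h k (h * k - 1 - m) * ((h * k - 1 - m : ℤ) : ℚ)
      rw [eps_reflect1 hh hk hho hko m]
  have hsum : (2 : ℚ) * ∑ m ∈ Icc (0 : ℤ) (h * k - 1), eps h k m * (m : ℚ)
      = ((h : ℚ) * k - 1) * ∑ m ∈ Icc (0 : ℤ) (h * k - 1), eps h k m := by
    rw [two_mul]
    nth_rewrite 1 [← hrev]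
    rw [← Finset.sum_add_distrib, Finset.mul_sum]
    refine Finset.sum_congr rfl (fun m _ => ?_)
    push_cast
    ring
  rw [eps_crt_sum hh hk hho hko huv, mul_one] at hsum
  linarith [hsum]

lemma mult_reindex {h k : ℤ} (hh : 0 < h) (hk : 0 < k) (G : ℤ → ℚ) :
    ∑ m ∈ (Icc (1 : ℤ) (h * k - 1)).filter (fun m => h ∣ m), G m
      = ∑ j ∈ Icc (1 : ℤ) (k - 1), G (h * j) := by
  refine Finset.sum_nbij' (fun m => m / h) (fun j => h * j) ?_ ?_ ?_ ?_ ?_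
  · intro m hm
    simp only [Finset.mem_filter, Finset.mem_Icc] at hm
    obtain ⟨⟨hm1, hm2⟩, t, rfl⟩ := hm
    show h * t / h ∈ Icc (1:ℤ) (k-1)
    rw [Int.mul_ediv_cancel_left t (ne_of_gt hh)]
    simp only [Finset.mem_Icc]
    constructor
    · nlinarith
    · nlinarith
  · intro j hj
    simp only [Finset.mem_Icc] at hj
    simp only [Finset.mem_filter, Finset.mem_Icc]
    exact ⟨⟨by nlinarith [hj.1], by nlinarith [hj.2]⟩, ⟨j, rfl⟩⟩
  · intro m hm
    simp only [Finset.mem_filter, Finset.mem_Icc] at hm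
    obtain ⟨_, t, rfl⟩ := hm
    show h * (h * t / h) = h * t
    rw [Int.mul_ediv_cancel_left t (ne_of_gt hh)]
  · intro j _
    exact Int.mul_ediv_cancel_left j (ne_of_gt hh)
  · intro m hm
    simp only [Finset.mem_filter, Finset.mem_Icc] at hm
    obtain ⟨_, t, rfl⟩ := hm
    show G (h * t) = G (h * (h * t / h))
    rw [Int.mul_ediv_cancel_left t (ne_of_gt hh)]

lemma eps_reflect2 {h k : ℤ} (hh : 0 < h) (hk : 0 < k) (hho : Odd h) (hko : Odd k) {m : ℤ}
    (hm1 : ¬ h ∣ m) (hm2 : ¬ k ∣ m) : eps h k (h * k - m) = eps h k m := by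
  unfold eps
  rw [reflect2 hh ⟨k, rfl⟩ hm1, reflect2 hk ⟨h, mul_comm h k⟩ hm2]
  apply S_congr
  obtain ⟨c, hc⟩ := hho
  obtain ⟨d, hd⟩ := hko
  exact ⟨c + d + 1 - m % h - m % k, by rw [hc, hd]; ring⟩

lemma eps_zero {h k : ℤ} : eps h k 0 = 1 := by
  unfold eps
  simp [S]

lemma eps_sum_Icc1 {h k : ℤ} (hh : 0 < h) (hk : 0 < k) (hho : Odd h) (hko : Odd k)
    {u v : ℤ} (huv : u * h + v * k = 1) :
    ∑ m ∈ Icc (1 : ℤ) (h * k - 1), eps h k m = 0 := by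
  have hN : 0 < h * k := mul_pos hh hk
  have h0 := eps_crt_sum hh hk hho hko huv
  rw [Icc0_eq_insert hN, Finset.sum_insert (by simp), eps_zero] at h0
  linarith [h0]

lemma mult_eps_h {h k : ℤ} (hh : 0 < h) (hk : 0 < k) (hko : Odd k)
    {u v : ℤ} (huv : u * h + v * k = 1) :
    ∑ m ∈ (Icc (1 : ℤ) (h * k - 1)).filter (fun m => h ∣ m), eps h k m = 0 := by
  rw [mult_reindex hh hk (eps h k)]
  have h1 : ∀ j ∈ Icc (1 : ℤ) (k - 1), eps h k (h * j) = S ((h * j) % k) := by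
    intro j _
    unfold eps
    rw [Int.mul_emod_right, zero_add]
  rw [Finset.sum_congr rfl h1, sum_perm hk huv S]
  exact S_sum_Icc1 hk hko

lemma nonmult_eps_sum {h k : ℤ} (hh : 0 < h) (hk : 0 < k) (hho : Odd h) (hko : Odd k)
    {u v : ℤ} (huv : u * h + v * k = 1) :
    ∑ m ∈ (Icc (1 : ℤ) (h * k - 1)).filter (fun m => ¬(h ∣ m ∨ k ∣ m)), eps h k m = 0 := by
  have huv' : v * k + u * h = 1 := by linarith
  have hdisj : Disjoint ((Icc (1 : ℤ) (h * k - 1)).filter (fun m => h ∣ m))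
      ((Icc (1 : ℤ) (h * k - 1)).filter (fun m => k ∣ m)) := by
    rw [Finset.disjoint_left]
    intro m hm1 hm2
    simp only [Finset.mem_filter, Finset.mem_Icc] at hm1 hm2
    have hcop : IsCoprime h k := ⟨u, v, huv⟩
    have : h * k ∣ m := hcop.mul_dvd hm1.2 hm2.2
    have := Int.le_of_dvd (by omega) this
    omega
  have hsplit := Finset.sum_filter_add_sum_filter_not (Icc (1 : ℤ) (h * k - 1))
    (fun m => h ∣ m ∨ k ∣ m) (eps h k)
  rw [Finset.filter_or, Finset.sum_union hdisj] at hsplit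
  have e1 := mult_eps_h hh hk hko huv
  have e2 : ∑ m ∈ (Icc (1 : ℤ) (h * k - 1)).filter (fun m => k ∣ m), eps h k m = 0 := by
    have := mult_eps_h hk hh hho huv'
    rw [mul_comm k h] at this
    calc ∑ m ∈ (Icc (1 : ℤ) (h * k - 1)).filter (fun m => k ∣ m), eps h k m
        = ∑ m ∈ (Icc (1 : ℤ) (h * k - 1)).filter (fun m => k ∣ m), eps k h m := by
          refine Finset.sum_congr rfl (fun m _ => ?_)
          unfold eps
          rw [add_comm]
      _ = 0 := this
  rw [e1, e2] at hsplit
  have := eps_sum_Icc1 hh hk hho hko huv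
  linarith [hsplit, this]

lemma nonmult_weighted {h k : ℤ} (hh : 0 < h) (hk : 0 < k) (hho : Odd h) (hko : Odd k)
    {u v : ℤ} (huv : u * h + v * k = 1) :
    ∑ m ∈ (Icc (1 : ℤ) (h * k - 1)).filter (fun m => ¬(h ∣ m ∨ k ∣ m)), eps h k m * (m : ℚ)
      = 0 := by
  set s' := (Icc (1 : ℤ) (h * k - 1)).filter (fun m => ¬(h ∣ m ∨ k ∣ m)) with hs'
  have hmem : ∀ m ∈ s', (1 ≤ m ∧ m ≤ h * k - 1) ∧ ¬ h ∣ m ∧ ¬ k ∣ m := by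
    intro m hm
    simp only [hs', Finset.mem_filter, Finset.mem_Icc] at hm
    exact ⟨hm.1, fun hd => hm.2 (Or.inl hd), fun hd => hm.2 (Or.inr hd)⟩
  have hrev : ∑ m ∈ s', eps h k m * ((h * k - m : ℤ) : ℚ) = ∑ m ∈ s', eps h k m * (m : ℚ) := by
    refine Finset.sum_nbij' (fun m => h * k - m) (fun m => h * k - m) ?_ ?_ ?_ ?_ ?_
    · intro m hm
      obtain ⟨⟨hb1, hb2⟩, hd1, hd2⟩ := hmem m hm
      simp only [hs', Finset.mem_filter, Finset.mem_Icc]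
      refine ⟨⟨by omega, by omega⟩, ?_⟩
      rintro (hd | hd)
      · exact hd1 ((dvd_sub_right ⟨k, rfl⟩).mp hd)
      · exact hd2 ((dvd_sub_right ⟨h, mul_comm h k⟩).mp hd)
    · intro m hm
      obtain ⟨⟨hb1, hb2⟩, hd1, hd2⟩ := hmem m hm
      simp only [hs', Finset.mem_filter, Finset.mem_Icc]
      refine ⟨⟨by omega, by omega⟩, ?_⟩
      rintro (hd | hd)
      · exact hd1 ((dvd_sub_right ⟨k, rfl⟩).mp hd)
      · exact hd2 ((dvd_sub_right ⟨h, mul_comm h k⟩).mp hd)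
    · intro m _; ring
    · intro m _; ring
    · intro m hm
      obtain ⟨_, hd1, hd2⟩ := hmem m hm
      show eps h k m * ((h * k - m : ℤ) : ℚ) = eps h k (h * k - m) * ((h * k - m : ℤ) : ℚ)
      rw [eps_reflect2 hh hk hho hko hd1 hd2]
  have hsum : (2 : ℚ) * ∑ m ∈ s', eps h k m * (m : ℚ)
      = ((h : ℚ) * k) * ∑ m ∈ s', eps h k m := by
    rw [two_mul]
    nth_rewrite 1 [← hrev]
    rw [← Finset.sum_add_distrib, Finset.mul_sum]
    refine Finset.sum_congr rfl (fun m _ => ?_)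
    push_cast
    ring
  rw [nonmult_eps_sum hh hk hho hko huv, mul_zero] at hsum
  linarith [hsum]

lemma T_reciprocity {h k : ℤ} (hh : 0 < h) (hk : 0 < k) (hho : Odd h) (hko : Odd k)
    {u v : ℤ} (huv : u * h + v * k = 1) :
    (∑ j ∈ Icc (1 : ℤ) (k - 1), S ((h * j) % k) * ((h * j : ℤ) : ℚ))
      + (∑ i ∈ Icc (1 : ℤ) (h - 1), S ((k * i) % h) * ((k * i : ℤ) : ℚ))
      = ((h : ℚ) * k - 1) / 2 := by
  have huv' : v * k + u * h = 1 := by linarith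
  have hN : 0 < h * k := mul_pos hh hk
  -- first sum = sum over h-multiples
  have e1 : ∑ m ∈ (Icc (1 : ℤ) (h * k - 1)).filter (fun m => h ∣ m), eps h k m * (m : ℚ)
      = ∑ j ∈ Icc (1 : ℤ) (k - 1), S ((h * j) % k) * ((h * j : ℤ) : ℚ) := by
    rw [mult_reindex hh hk (fun m => eps h k m * (m : ℚ))]
    refine Finset.sum_congr rfl (fun j _ => ?_)
    show eps h k (h * j) * ((h * j : ℤ) : ℚ) = _
    unfold eps
    rw [Int.mul_emod_right, zero_add]
  have e2 : ∑ m ∈ (Icc (1 : ℤ) (h * k - 1)).filter (fun m => k ∣ m), eps h k m * (m : ℚ)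
      = ∑ i ∈ Icc (1 : ℤ) (h - 1), S ((k * i) % h) * ((k * i : ℤ) : ℚ) := by
    have hrw : ∑ m ∈ (Icc (1 : ℤ) (h * k - 1)).filter (fun m => k ∣ m), eps h k m * (m : ℚ)
        = ∑ m ∈ (Icc (1 : ℤ) (k * h - 1)).filter (fun m => k ∣ m), eps k h m * (m : ℚ) := by
      rw [mul_comm h k]
      refine Finset.sum_congr rfl (fun m _ => ?_)
      unfold eps
      rw [add_comm (m % h) (m % k)]
    rw [hrw, mult_reindex hk hh (fun m => eps k h m * (m : ℚ))]
    refine Finset.sum_congr rfl (fun i _ => ?_)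
    show eps k h (k * i) * ((k * i : ℤ) : ℚ) = _
    unfold eps
    rw [Int.mul_emod_right, zero_add]
  have hdisj : Disjoint ((Icc (1 : ℤ) (h * k - 1)).filter (fun m => h ∣ m))
      ((Icc (1 : ℤ) (h * k - 1)).filter (fun m => k ∣ m)) := by
    rw [Finset.disjoint_left]
    intro m hm1 hm2
    simp only [Finset.mem_filter, Finset.mem_Icc] at hm1 hm2
    have hcop : IsCoprime h k := ⟨u, v, huv⟩
    have := Int.le_of_dvd (by omega) (hcop.mul_dvd hm1.2 hm2.2)
    omega
  have hsplit := Finset.sum_filter_add_sum_filter_not (Icc (1 : ℤ) (h * k - 1))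
    (fun m => h ∣ m ∨ k ∣ m) (fun m => eps h k m * (m : ℚ))
  rw [Finset.filter_or, Finset.sum_union hdisj] at hsplit
  have hfull : ∑ m ∈ Icc (1 : ℤ) (h * k - 1), eps h k m * (m : ℚ) = ((h : ℚ) * k - 1) / 2 := by
    have h0 := eps_full_weighted hh hk hho hko huv
    rw [Icc0_eq_insert hN, Finset.sum_insert (by simp)] at h0
    simpa using h0
  have hnon := nonmult_weighted hh hk hho hko huv
  rw [hfull, hnon, e1, e2] at hsplit
  linarith [hsplit]

theorem B1_reciprocity {h k : ℤ} (hh : 0 < h) (hk : 0 < k) (hho : Odd h) (hko : Odd k)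
    (hcop : IsCoprime h k) :
    (k : ℚ) * B1 h k + (h : ℚ) * B1 k h = ((h : ℚ) - 1) * ((k : ℚ) - 1) / 2 := by
  obtain ⟨u, v, huv⟩ := hcop
  have huv' : v * k + u * h = 1 := by linarith
  rw [kB1_eq hk hho hko huv, kB1_eq hh hko hho huv']
  have := T_reciprocity hh hk hho hko huv
  linarith [this]

lemma fib_parity : ∀ t : ℕ, Odd (Nat.fib (3*t+1)) ∧ Odd (Nat.fib (3*t+2)) := by
  intro t
  induction t with
  | zero => decide
  | succ t ih =>
    obtain ⟨⟨a, ha⟩, ⟨b, hb⟩⟩ := ih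
    have v3 : Nat.fib (3*t+3) = Nat.fib (3*t+1) + Nat.fib (3*t+2) := by
      rw [show 3*t+3 = 3*t+1+2 from by ring, Nat.fib_add_two,
        show 3*t+1+1 = 3*t+2 from by ring]
    have v4 : Nat.fib (3*t+4) = Nat.fib (3*t+2) + Nat.fib (3*t+3) := by
      rw [show 3*t+4 = 3*t+2+2 from by ring, Nat.fib_add_two,
        show 3*t+2+1 = 3*t+3 from by ring]
    have v5 : Nat.fib (3*t+5) = Nat.fib (3*t+3) + Nat.fib (3*t+4) := by
      rw [show 3*t+5 = 3*t+3+2 from by ring, Nat.fib_add_two,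
        show 3*t+3+1 = 3*t+4 from by ring]
    constructor
    · rw [show 3*(t+1)+1 = 3*t+4 from by ring]
      exact ⟨a + 2*b + 1, by omega⟩
    · rw [show 3*(t+1)+2 = 3*t+5 from by ring]
      exact ⟨2*a + 3*b + 2, by omega⟩

lemma cassini : ∀ m : ℕ, ((Nat.fib (m+1)) : ℤ)^2 = (Nat.fib (m+2) : ℤ) * Nat.fib m + (-1)^m := by
  intro m
  induction m with
  | zero => decide
  | succ m ih =>
    have h2 : (Nat.fib (m+2) : ℤ) = Nat.fib m + Nat.fib (m+1) := by
      exact_mod_cast (Nat.fib_add_two (n := m))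
    have h3 : (Nat.fib (m+3) : ℤ) = Nat.fib (m+1) + Nat.fib (m+2) := by
      exact_mod_cast (Nat.fib_add_two (n := m+1))
    have hgoal : ((Nat.fib (m+2)) : ℤ)^2 = (Nat.fib (m+3) : ℤ) * Nat.fib (m+1) + (-1)^(m+1) := by
      rw [h3, pow_succ]
      linear_combination (-1 : ℤ) * ih + ((Nat.fib (m+2) : ℤ)) * h2
    exact_mod_cast hgoal

theorem stmt_14 (n : ℕ) (hn : 0 < n) (h k : ℤ)
    (hdef : h = (Nat.fib (6 * n - 1) : ℤ)) (kdef : k = (Nat.fib (6 * n + 1) : ℤ)) :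
    (k : ℚ) * B1 h k + (h : ℚ) * B1 k h
      = ((h : ℚ) ^ 2 - (h : ℚ) - (k : ℚ) + (k : ℚ) ^ 2) / 2 - (h : ℚ) * (k : ℚ) + 1 := by
  subst hdef kdef
  set a := 6 * n - 1 with ha
  rw [show 6 * n + 1 = a + 2 from by omega]
  have hodd_h : Odd (Nat.fib a) := by
    rw [show a = 3 * (2 * n - 1) + 2 from by omega]
    exact (fib_parity (2 * n - 1)).2
  have hodd_k : Odd (Nat.fib (a + 2)) := by
    rw [show a + 2 = 3 * (2 * n) + 1 from by omega]
    exact (fib_parity (2 * n)).1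
  have hpos_h : 0 < Nat.fib a := Nat.fib_pos.mpr (by omega)
  have hpos_k : 0 < Nat.fib (a + 2) := Nat.fib_pos.mpr (by omega)
  have hcop : Nat.Coprime (Nat.fib a) (Nat.fib (a + 2)) := by
    have hsucc := Nat.fib_coprime_fib_succ a
    rw [Nat.fib_add_two, add_comm, Nat.coprime_add_self_right]
    exact hsucc
  have hcopZ : IsCoprime ((Nat.fib a : ℤ)) ((Nat.fib (a + 2) : ℤ)) :=
    Nat.isCoprime_iff_coprime.mpr hcop
  have haodd : Odd a := ⟨3 * n - 1, by omega⟩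
  have hcas := cassini a
  rw [haodd.neg_one_pow] at hcas
  have hstep : ((Nat.fib (a + 2)) : ℤ) = Nat.fib a + Nat.fib (a + 1) := by
    exact_mod_cast (Nat.fib_add_two (n := a))
  have main := B1_reciprocity (h := (Nat.fib a : ℤ)) (k := (Nat.fib (a + 2) : ℤ))
    (by exact_mod_cast hpos_h) (by exact_mod_cast hpos_k)
    (by exact_mod_cast hodd_h) (by exact_mod_cast hodd_k) hcopZ
  rw [main]
  have hQrel : ((Nat.fib (a + 2) : ℚ)) * (Nat.fib a : ℚ) = ((Nat.fib (a + 1) : ℚ)) ^ 2 + 1 := by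
    exact_mod_cast congrArg (fun z : ℤ => (z : ℚ)) (by linarith [hcas] :
      ((Nat.fib (a + 2) : ℤ)) * Nat.fib a = (Nat.fib (a + 1) : ℤ) ^ 2 + 1)
  have hQstep : ((Nat.fib (a + 2) : ℚ)) = (Nat.fib a : ℚ) + (Nat.fib (a + 1) : ℚ) := by
    exact_mod_cast hstep
  push_cast
  linear_combination (1 / 2 : ℚ) * hQrel
    + ((Nat.fib a : ℚ) - ((Nat.fib (a + 2) : ℚ) + (Nat.fib a : ℚ) + (Nat.fib (a + 1) : ℚ)) / 2)
      * hQstep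
end

section
/- Let n be a positive natural number and set h = F_{6n-1} and k = F_{6n+1}, where F_m is the m-th Fibonacci number. Then h·Y(h,k) + k·Y(k,h) = 2h² + 2k² - 4hk. -/
/-- The Simsek sum `Y(h,k) = 4k·Σ_{j=1}^{k} (-1)^{j+⌊hj/k⌋}·((j/k))`. -/
noncomputable def simsekY (h k : ℤ) : ℚ :=
  4 * k * ∑ j ∈ Finset.Icc (1 : ℤ) k,
    (-1 : ℚ) ^ (j + ⌊((h * j : ℤ) : ℚ) / (k : ℚ)⌋) * saw ((j : ℚ) / (k : ℚ))

open Finset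

namespace Simsek

def sg (x : ℤ) : ℤ := if x % 2 = 0 then 1 else -1

lemma sg_congr {a b : ℤ} (h : a % 2 = b % 2) : sg a = sg b := by unfold sg; rw [h]

lemma sg_add (a b : ℤ) : sg (a + b) = sg a * sg b := by
  unfold sg; split_ifs <;> omega

lemma sg_one : sg 1 = -1 := rfl

lemma icc_succ_top {m : ℤ} (hm : 0 ≤ m) (f : ℤ → ℤ) :
    (∑ t ∈ Icc (1:ℤ) (m+1), f t) = (∑ t ∈ Icc (1:ℤ) m, f t) + f (m+1) := by
  rw [show Icc (1:ℤ) (m+1) = insert (m+1) (Icc 1 m) by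
    ext x; simp only [Finset.mem_insert, Finset.mem_Icc]; omega]
  rw [Finset.sum_insert (by simp only [Finset.mem_Icc]; omega)]
  ring

lemma alt_sg_sum_nat (n : ℕ) :
    (∑ t ∈ Icc (1:ℤ) (n:ℤ), sg t) = if (n:ℤ) % 2 = 0 then 0 else -1 := by
  induction n with
  | zero => simp
  | succ n ih =>
      have : ((n+1 : ℕ) : ℤ) = (n:ℤ) + 1 := by push_cast; ring
      rw [this, icc_succ_top (by positivity), ih]
      have h1 : sg ((n:ℤ)+1) = if ((n:ℤ)+1) % 2 = 0 then 1 else -1 := rfl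
      rw [h1]; split_ifs <;> omega

lemma alt_sg_sum {m : ℤ} (hm : 0 ≤ m) :
    (∑ t ∈ Icc (1:ℤ) m, sg t) = if m % 2 = 0 then 0 else -1 := by
  have := alt_sg_sum_nat m.toNat
  rwa [Int.toNat_of_nonneg hm] at this

lemma alt_sg_mul_sum_nat (n : ℕ) :
    (∑ t ∈ Icc (1:ℤ) (n:ℤ), sg t * t) = if (n:ℤ) % 2 = 0 then (n:ℤ) / 2 else -(((n:ℤ)+1)/2) := by
  induction n with
  | zero => simp
  | succ n ih =>
      have : ((n+1 : ℕ) : ℤ) = (n:ℤ) + 1 := by push_cast; ring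
      rw [this, icc_succ_top (by positivity) (fun t => sg t * t), ih]
      have h1 : sg ((n:ℤ)+1) = if ((n:ℤ)+1) % 2 = 0 then 1 else -1 := rfl
      rw [h1]; split_ifs <;> ring_nf <;> omega

lemma alt_sg_mul_sum {m : ℤ} (hm : 0 ≤ m) :
    (∑ t ∈ Icc (1:ℤ) m, sg t * t) = if m % 2 = 0 then m / 2 else -((m+1)/2) := by
  have := alt_sg_mul_sum_nat m.toNat
  rwa [Int.toNat_of_nonneg hm] at this

noncomputable def Nsum (a c : ℤ) : ℤ := ∑ j ∈ Icc (1:ℤ) (c-1), sg ((a*j) % c) * j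
noncomputable def Vsum (a c : ℤ) : ℤ := ∑ j ∈ Icc (1:ℤ) (c-1), sg ((a*j) % c) * ((a*j) / c)

lemma key_emod {u a v c : ℤ} (h : u*a + v*c = 1) (j : ℤ) :
    (u * ((a*j) % c)) % c = j % c := by
  have h1 : (u * ((a*j) % c)) % c = (u * (a*j)) % c := by
    rw [Int.mul_emod u ((a*j)%c) c, Int.emod_emod_of_dvd _ dvd_rfl, ← Int.mul_emod]
  rw [h1, show u * (a*j) = j + (-(v*j))*c by linear_combination j * h, Int.add_mul_emod_self_right]

lemma dvd_of_dvd_mul {u a v c j : ℤ} (h : u*a + v*c = 1) (hd : c ∣ a * j) : c ∣ j := by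
  have : j = u * (a*j) + (v*j)*c := by linear_combination (-j) * h
  rw [this]
  exact dvd_add (Dvd.dvd.mul_left hd u) (dvd_mul_left c (v*j))

lemma reindex {a c : ℤ} (hc : 0 < c) (hcop : IsCoprime a c) (F : ℤ → ℤ) :
    (∑ j ∈ Icc (1:ℤ) (c-1), F ((a*j) % c)) = ∑ t ∈ Icc (1:ℤ) (c-1), F t := by
  obtain ⟨u, v, huv⟩ := hcop
  have huv' : u*a + v*c = 1 := by linarith [huv]
  have huv2 : a*u + v*c = 1 := by linarith [huv]
  apply Finset.sum_nbij' (fun j => (a*j) % c) (fun t => (u*t) % c)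
  · intro j hj
    simp only [Finset.mem_Icc] at *
    have h0 : 0 ≤ (a*j) % c := Int.emod_nonneg _ (by omega)
    have h1 : (a*j) % c < c := Int.emod_lt_of_pos _ hc
    have h2 : (a*j) % c ≠ 0 := by
      intro hz
      have hd := dvd_of_dvd_mul huv' (Int.dvd_of_emod_eq_zero hz)
      have := Int.le_of_dvd (by omega) hd
      omega
    omega
  · intro t ht
    simp only [Finset.mem_Icc] at *
    have h0 : 0 ≤ (u*t) % c := Int.emod_nonneg _ (by omega)
    have h1 : (u*t) % c < c := Int.emod_lt_of_pos _ hc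
    have h2 : (u*t) % c ≠ 0 := by
      intro hz
      have hd := dvd_of_dvd_mul huv2 (Int.dvd_of_emod_eq_zero hz)
      have := Int.le_of_dvd (by omega) hd
      omega
    omega
  · intro j hj
    simp only [Finset.mem_Icc] at hj
    rw [key_emod huv', Int.emod_eq_of_lt (by omega) (by omega)]
  · intro t ht
    simp only [Finset.mem_Icc] at ht
    rw [key_emod huv2, Int.emod_eq_of_lt (by omega) (by omega)]
  · intro j hj; rfl

lemma sg_emod_sum_zero {a c : ℤ} (hc : 0 < c) (hodd : c % 2 = 1) (hcop : IsCoprime a c) :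
    (∑ j ∈ Icc (1:ℤ) (c-1), sg ((a*j) % c)) = 0 := by
  rw [reindex hc hcop sg, alt_sg_sum (by omega)]
  have : (c-1) % 2 = 0 := by omega
  rw [if_pos this]

lemma perm_lemma {a c : ℤ} (hc : 0 < c) (hodd : c % 2 = 1) (hcop : IsCoprime a c) :
    2*(a * Nsum a c) - 2*(c * Vsum a c) = c - 1 := by
  have step1 : a * Nsum a c - c * Vsum a c
      = ∑ j ∈ Icc (1:ℤ) (c-1), sg ((a*j) % c) * ((a*j) % c) := by
    unfold Nsum Vsum
    rw [Finset.mul_sum, Finset.mul_sum, ← Finset.sum_sub_distrib]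
    apply Finset.sum_congr rfl
    intro j _
    have : (a*j) % c = a*j - c*((a*j)/c) := by rw [Int.emod_def]
    rw [this]; ring
  have step2 : (∑ j ∈ Icc (1:ℤ) (c-1), sg ((a*j) % c) * ((a*j) % c))
      = (c-1)/2 := by
    rw [reindex hc hcop (fun x => sg x * x), alt_sg_mul_sum (by omega : (0:ℤ) ≤ c - 1)]
    have : (c-1) % 2 = 0 := by omega
    rw [if_pos this]
  omega

noncomputable def Wq (k h q : ℤ) : ℤ :=
  ∑ t ∈ Icc (1:ℤ) (k-1), if (q*k + t) % h = 0 then sg t else 0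

lemma pair_decomp {h k : ℤ} (hh : 0 < h) (hk : 0 < k) (hcop : IsCoprime h k) :
    Vsum h k = ∑ q ∈ Icc (0:ℤ) (h-1), Wq k h q * q := by
  have step1 : Vsum h k =
      ∑ p ∈ ((Icc (0:ℤ) (h-1)) ×ˢ (Icc (1:ℤ) (k-1))).filter
        (fun p => (p.1*k + p.2) % h = 0), sg p.2 * p.1 := by
    apply Finset.sum_nbij' (fun j => ((h*j)/k, (h*j)%k)) (fun p => (p.1*k + p.2)/h)
    · intro j hj
      simp only [Finset.mem_Icc] at hj
      simp only [Finset.mem_filter, Finset.mem_product, Finset.mem_Icc]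
      obtain ⟨u, v, huv⟩ := hcop
      have huv' : u*h + v*k = 1 := by linarith [huv]
      refine ⟨⟨⟨Int.ediv_nonneg (by nlinarith) (by omega), ?_⟩, ?_, ?_⟩, ?_⟩
      · have : h*j/k < h := by
          rw [Int.ediv_lt_iff_lt_mul hk]; nlinarith
        omega
      · have h0 : 0 ≤ (h*j) % k := Int.emod_nonneg _ (by omega)
        have h2 : (h*j) % k ≠ 0 := by
          intro hz
          have hd := dvd_of_dvd_mul huv' (Int.dvd_of_emod_eq_zero hz)
          have := Int.le_of_dvd (by omega) hd
          omega
        omega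
      · have := Int.emod_lt_of_pos (h*j) hk; omega
      · have : k * (h*j/k) + (h*j) % k = h*j := Int.mul_ediv_add_emod _ _
        have e2 : (h*j/k)*k + (h*j)%k = h*j := by linarith
        rw [e2]
        simp [Int.mul_emod_right]
    · intro p hp
      simp only [Finset.mem_filter, Finset.mem_product, Finset.mem_Icc] at hp
      obtain ⟨⟨⟨hq0, hq1⟩, ht0, ht1⟩, hcond⟩ := hp
      have hdvd : h ∣ p.1*k + p.2 := Int.dvd_of_emod_eq_zero hcond
      simp only [Finset.mem_Icc]
      constructor
      · have hpos : 0 < p.1*k + p.2 := by nlinarith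
        have := Int.le_of_dvd hpos hdvd
        rw [Int.le_ediv_iff_mul_le hh]; omega
      · have : (p.1*k + p.2)/h < k := by
          rw [Int.ediv_lt_iff_lt_mul hh]; nlinarith
        omega
    · intro j hj
      simp only [Finset.mem_Icc] at hj
      have e2 : (h*j/k)*k + (h*j)%k = h*j := by
        have := Int.mul_ediv_add_emod (h*j) k; linarith
      rw [e2, Int.mul_ediv_cancel_left _ (by omega : h ≠ 0)]
    · intro p hp
      simp only [Finset.mem_filter, Finset.mem_product, Finset.mem_Icc] at hp
      obtain ⟨⟨⟨hq0, hq1⟩, ht0, ht1⟩, hcond⟩ := hp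
      have hdvd : h ∣ p.1*k + p.2 := Int.dvd_of_emod_eq_zero hcond
      have e1 : h * ((p.1*k + p.2)/h) = p.1*k + p.2 := Int.mul_ediv_cancel' hdvd
      rw [e1]
      have e2 : p.1*k + p.2 = p.2 + p.1*k := by ring
      rw [e2]
      have e3 : (p.2 + p.1*k)/k = p.1 := by
        rw [Int.add_mul_ediv_right _ _ (by omega : k ≠ 0),
          Int.ediv_eq_zero_of_lt (by omega) (by omega)]
        ring
      have e4 : (p.2 + p.1*k)%k = p.2 := by
        rw [Int.add_mul_emod_self_right, Int.emod_eq_of_lt (by omega) (by omega)]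
      rw [e3, e4]
    · intro j hj; rfl
  rw [step1, Finset.sum_filter, Finset.sum_product]
  unfold Wq
  apply Finset.sum_congr rfl
  intro q _
  rw [Finset.sum_mul]
  apply Finset.sum_congr rfl
  intro t _
  split_ifs <;> simp

lemma range_sg_sum (M : ℕ) :
    (∑ s ∈ Finset.range M, sg (s:ℤ)) = if M % 2 = 0 then 0 else 1 := by
  induction M with
  | zero => simp
  | succ n ih =>
      rw [Finset.sum_range_succ, ih]
      have h1 : sg (n:ℤ) = if (n:ℤ) % 2 = 0 then 1 else -1 := rfl
      rw [h1]; split_ifs <;> omega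

lemma sg_odd_mul {a s : ℤ} (ha : a % 2 = 1) : sg (a*s) = sg s :=
  sg_congr (by rw [Int.mul_emod, ha, one_mul, Int.emod_emod_of_dvd _ dvd_rfl])

lemma W_eval {h k q : ℤ} (hh : 0 < h) (hk : 0 < k) (hho : h % 2 = 1)
    (hcop : IsCoprime k h) (hq1 : 1 ≤ q) (hq2 : q ≤ h - 1) :
    Wq k h q = sg (h - (q*k)%h) *
      (if ((k - 1 - (h - (q*k)%h))/h + 1) % 2 = 0 then 0 else 1) := by
  obtain ⟨uu, vv, huv⟩ := hcop
  have huv' : uu*k + vv*h = 1 := by linarith [huv]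
  set u := (q*k) % h with hu_def
  have hu0 : 0 ≤ u := Int.emod_nonneg _ (by omega)
  have hu1 : u < h := Int.emod_lt_of_pos _ hh
  have hune : u ≠ 0 := by
    intro hz
    have hd : h ∣ k * q := by
      rw [mul_comm]; exact Int.dvd_of_emod_eq_zero hz
    have := Int.le_of_dvd (by omega) (dvd_of_dvd_mul huv' hd)
    omega
  set τ := h - u with hτ_def
  have hτ1 : 1 ≤ τ := by omega
  have hτ2 : τ ≤ h - 1 := by omega
  set m := (k - 1 - τ)/h + 1 with hm_def
  have hm0 : 0 ≤ m := by
    have : (-1:ℤ) ≤ (k - 1 - τ)/h := by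
      rw [Int.le_ediv_iff_mul_le hh]; omega
    omega
  set D := (q*k)/h with hD_def
  have hDu : q*k = h*D + u := (Int.mul_ediv_add_emod _ _).symm
  have hseteq : (Icc (1:ℤ) (k-1)).filter (fun t => (q*k + t) % h = 0)
      = Finset.image (fun s : ℕ => τ + h*(s:ℤ)) (Finset.range m.toNat) := by
    ext x
    simp only [Finset.mem_filter, Finset.mem_Icc, Finset.mem_image, Finset.mem_range]
    constructor
    · rintro ⟨⟨hx1, hx2⟩, hcond⟩
      have hdvd : h ∣ q*k + x := Int.dvd_of_emod_eq_zero hcond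
      have hdvd2 : h ∣ x - τ := by
        have : x - τ = (q*k + x) - h*(D + 1) := by rw [hDu]; ring
        rw [this]
        exact dvd_sub hdvd (Dvd.intro _ rfl)
      set s := (x - τ)/h with hs_def
      have hsx : h * s = x - τ := Int.mul_ediv_cancel' hdvd2
      have hs0 : 0 ≤ s := by nlinarith
      have hsm : s ≤ m - 1 := by
        rw [hm_def]
        have : s ≤ (k-1-τ)/h := by
          rw [Int.le_ediv_iff_mul_le hh]; nlinarith
        omega
      refine ⟨s.toNat, by omega, by rw [Int.toNat_of_nonneg hs0]; omega⟩
    · rintro ⟨s, hs, rfl⟩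
      have hs' : (s:ℤ) ≤ m - 1 := by omega
      have hdiv : h*((k-1-τ)/h) ≤ k-1-τ := by
        have h1 := Int.mul_ediv_add_emod (k-1-τ) h
        have h2 := Int.emod_nonneg (k-1-τ) (by omega : h ≠ 0)
        omega
      have hup : h*(s:ℤ) ≤ k-1-τ := by
        calc h*(s:ℤ) ≤ h*(m-1) := by
              apply mul_le_mul_of_nonneg_left hs' (by omega)
          _ ≤ k-1-τ := by rw [hm_def]; simpa using hdiv
      have hhs : 0 ≤ h*(s:ℤ) := by positivity
      refine ⟨⟨by omega, by omega⟩, ?_⟩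
      have : q*k + (τ + h*(s:ℤ)) = (D + 1 + s)*h := by rw [hDu]; ring
      rw [this]
      exact Int.mul_emod_left _ _
  have : Wq k h q = ∑ t ∈ (Icc (1:ℤ) (k-1)).filter (fun t => (q*k + t) % h = 0), sg t := by
    rw [Finset.sum_filter]; rfl
  rw [this, hseteq, Finset.sum_image (by
    intro s1 _ s2 _ heq
    have : h*(s1:ℤ) = h*(s2:ℤ) := by simp only at heq; omega
    have := mul_left_cancel₀ (by omega : h ≠ 0) this
    omega)]
  have hterm : ∀ s : ℕ, sg (τ + h*(s:ℤ)) = sg τ * sg (s:ℤ) := by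
    intro s
    rw [sg_add, sg_odd_mul hho]
  rw [Finset.sum_congr rfl (fun s _ => hterm s), ← Finset.mul_sum, range_sg_sum]
  have hmt : (m.toNat : ℤ) = m := Int.toNat_of_nonneg hm0
  congr 1
  split_ifs with p1 p2 p2 <;> first | rfl | omega

lemma emod_ne_zero {h k q : ℤ} (hh : 0 < h) (hcop : IsCoprime k h)
    (hq1 : 1 ≤ q) (hq2 : q ≤ h - 1) : (q*k) % h ≠ 0 := by
  obtain ⟨uu, vv, huv⟩ := hcop
  have huv' : uu*k + vv*h = 1 := by linarith [huv]
  intro hz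
  have hd : h ∣ k * q := by rw [mul_comm]; exact Int.dvd_of_emod_eq_zero hz
  have := Int.le_of_dvd (by omega) (dvd_of_dvd_mul huv' hd)
  omega

lemma sg_of_h_sub {h τ : ℤ} (hho : h % 2 = 1) : sg (h - τ) = -(sg τ) := by
  have h1 : sg (h - τ) = sg (τ + 1) := sg_congr (by omega)
  rw [h1, sg_add, sg_one]; ring

lemma pointwise_mid {h k q : ℤ} (hh : 0 < h) (hk : 0 < k) (hho : h % 2 = 1)
    (hko : k % 2 = 1) (hcop : IsCoprime k h) (hq1 : 1 ≤ q) (hq2 : q ≤ h - 2) :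
    2*(Wq k h q)*q + 2*q*sg ((q*k)%h)
      = q * (sg ((q*k)%h) - sg (((q+1)*k)%h)) := by
  rw [W_eval hh hk hho hcop hq1 (by omega)]
  set u := (q*k) % h with hu_def
  have hu0 : 0 ≤ u := Int.emod_nonneg _ (by omega)
  have hu1 : u < h := Int.emod_lt_of_pos _ hh
  have hune : u ≠ 0 := emod_ne_zero hh hcop hq1 (by omega)
  set τ := h - u with hτ_def
  set m := (k - 1 - τ)/h + 1 with hm_def
  set D := (q*k)/h with hD_def
  have hDu : q*k = h*D + u := (Int.mul_ediv_add_emod _ _).symm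
  set u' := ((q+1)*k) % h with hu'_def
  have hu'0 : 0 ≤ u' := Int.emod_nonneg _ (by omega)
  have hu'1 : u' < h := Int.emod_lt_of_pos _ hh
  have hu'ne : u' ≠ 0 := emod_ne_zero hh hcop (by omega) (by omega)
  have hu'alt : u' = (k - τ) % h := by
    rw [hu'_def, show (q+1)*k = (k - τ) + (D+1)*h by rw [hτ_def]; linarith [hDu],
      Int.add_mul_emod_self_right]
  set E := k - τ with hE_def
  set d := E / h with hd_def
  have hEd : E = h*d + u' := by
    rw [hu'alt, hd_def]; exact (Int.mul_ediv_add_emod _ _).symm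
  have hm_eq : m = d + 1 := by
    rw [hm_def]
    have : k - 1 - τ = (u'-1) + d*h := by
      have : k - τ = h*d + u' := hEd
      linarith [this]
    rw [this, Int.add_mul_ediv_right _ _ (by omega : h ≠ 0),
      Int.ediv_eq_zero_of_lt (by omega) (by omega)]
    ring
  have hpar : (h*d) % 2 = d % 2 := by
    rw [Int.mul_emod, hho, one_mul, Int.emod_emod_of_dvd _ dvd_rfl]
  have hsgu' : sg u' = sg (τ + m) := sg_congr (by omega)
  have hsgu : sg u = -(sg τ) := by
    have he : u = h - τ := by omega
    rw [he]; exact sg_of_h_sub hho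
  rw [hsgu', hsgu]
  rcases Int.emod_two_eq_zero_or_one m with hm2 | hm2
  · rw [if_pos hm2]
    have : sg (τ + m) = sg τ := sg_congr (by omega)
    rw [this]; ring
  · rw [if_neg (by omega)]
    have : sg (τ + m) = -(sg τ) := by
      have h1 : sg (τ + m) = sg (τ + 1) := sg_congr (by omega)
      rw [h1, sg_add, sg_one]; ring
    rw [this]; ring

lemma pointwise_top {h k : ℤ} (hh : 3 ≤ h) (hk : 0 < k) (hho : h % 2 = 1)
    (hko : k % 2 = 1) (hcop : IsCoprime k h) :
    2*(Wq k h (h-1))*(h-1) + 2*(h-1)*sg (((h-1)*k)%h)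
      = (h-1) * (sg (((h-1)*k)%h) + 1) := by
  rw [W_eval (by omega) hk hho hcop (by omega) (by omega)]
  set u := ((h-1)*k) % h with hu_def
  have hu0 : 0 ≤ u := Int.emod_nonneg _ (by omega)
  have hu1 : u < h := Int.emod_lt_of_pos _ (by omega)
  have hune : u ≠ 0 := emod_ne_zero (by omega) hcop (by omega) (by omega)
  set τ := h - u with hτ_def
  set κ := k % h with hκ_def
  have hκ0 : 0 ≤ κ := Int.emod_nonneg _ (by omega)
  have hκ1 : κ < h := Int.emod_lt_of_pos _ (by omega)
  set d := k / h with hd_def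
  have hkd : k = h*d + κ := (Int.mul_ediv_add_emod _ _).symm
  have hκne : κ ≠ 0 := by
    have := emod_ne_zero (h := h) (k := k) (q := 1) (by omega) hcop (by omega) (by omega)
    simpa [hκ_def] using this
  have hue : u = h - κ := by
    rw [hu_def, show (h-1)*k = (h - κ) + (k - d - 1)*h by linarith [hkd]]
    rw [Int.add_mul_emod_self_right, Int.emod_eq_of_lt (by omega) (by omega)]
  have hτκ : τ = κ := by omega
  have hm_eq : (k - 1 - τ)/h + 1 = d := by
    rw [hτκ, show k - 1 - κ = (h-1) + (d-1)*h by linarith [hkd],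
      Int.add_mul_ediv_right _ _ (by omega : h ≠ 0),
      Int.ediv_eq_zero_of_lt (by omega) (by omega)]
    ring
  have hpar : (h*d) % 2 = d % 2 := by
    rw [Int.mul_emod, hho, one_mul, Int.emod_emod_of_dvd _ dvd_rfl]
  rw [hm_eq, hτκ]
  have hsgu : sg u = -(sg κ) := by rw [hue]; exact sg_of_h_sub hho
  rcases Int.emod_two_eq_zero_or_one κ with hκ2 | hκ2
  · have hd2 : d % 2 = 1 := by omega
    rw [if_neg (by omega)]
    have h1 : sg κ = 1 := by unfold sg; rw [if_pos hκ2]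
    rw [hsgu, h1]; ring
  · have hd2 : d % 2 = 0 := by omega
    rw [if_pos (by omega)]
    have h1 : sg κ = -1 := by unfold sg; rw [if_neg (by omega)]
    rw [hsgu, h1]; ring

lemma telescope_nat (ε : ℤ → ℤ) (n : ℕ) :
    (∑ q ∈ Icc (1:ℤ) (n:ℤ), q*(ε q - ε (q+1)))
      = (∑ q ∈ Icc (1:ℤ) (n:ℤ), ε q) - (n:ℤ)*ε ((n:ℤ)+1) := by
  induction n with
  | zero => simp
  | succ n ih =>
      have hc : ((n+1 : ℕ) : ℤ) = (n:ℤ) + 1 := by push_cast; ring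
      rw [hc, icc_succ_top (by positivity) (fun q => q*(ε q - ε (q+1))),
        icc_succ_top (by positivity) ε, ih]
      ring

lemma telescope (ε : ℤ → ℤ) {n : ℤ} (hn : 0 ≤ n) :
    (∑ q ∈ Icc (1:ℤ) n, q*(ε q - ε (q+1)))
      = (∑ q ∈ Icc (1:ℤ) n, ε q) - n*ε (n+1) := by
  have := telescope_nat ε n.toNat
  rwa [Int.toNat_of_nonneg hn] at this

lemma bridge {h k : ℤ} (hh : 0 < h) (hk : 0 < k) (hho : h % 2 = 1) (hko : k % 2 = 1)
    (hcopkh : IsCoprime k h) (hcophk : IsCoprime h k) :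
    2 * Vsum h k + 2 * Nsum k h = h - 1 := by
  rcases eq_or_lt_of_le (by omega : 1 ≤ h) with h1 | h3
  · have hV : Vsum h k = 0 := by
      unfold Vsum
      apply Finset.sum_eq_zero
      intro j hj
      simp only [Finset.mem_Icc] at hj
      rw [← h1]
      rw [Int.ediv_eq_zero_of_lt (by omega) (by omega)]
      ring
    have hN : Nsum k h = 0 := by
      unfold Nsum
      rw [← h1]
      simp
    rw [hV, hN]; omega
  have h3' : 3 ≤ h := by omega
  set ε : ℤ → ℤ := fun q => sg ((q*k)%h) with hε
  have hVW : 2 * Vsum h k = ∑ q ∈ Icc (1:ℤ) (h-1), 2*(Wq k h q)*q := by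
    rw [pair_decomp hh hk hcophk]
    rw [show Icc (0:ℤ) (h-1) = insert 0 (Icc 1 (h-1)) by
      ext x; simp only [Finset.mem_insert, Finset.mem_Icc]; omega]
    rw [Finset.sum_insert (by simp only [Finset.mem_Icc]; omega)]
    simp only [mul_zero, zero_add]
    rw [Finset.mul_sum]
    apply Finset.sum_congr rfl
    intro q _; ring
  have hNW : 2 * Nsum k h = ∑ q ∈ Icc (1:ℤ) (h-1), 2*q*(ε q) := by
    unfold Nsum
    rw [Finset.mul_sum]
    apply Finset.sum_congr rfl
    intro q _
    rw [hε]
    simp only []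
    rw [mul_comm k q]
    ring
  have hsum0 : (∑ q ∈ Icc (1:ℤ) (h-1), ε q) = 0 := by
    have := sg_emod_sum_zero hh hho hcopkh
    rw [← this]
    apply Finset.sum_congr rfl
    intro q _
    rw [hε]; simp only []; rw [mul_comm k q]
  have key : 2 * Vsum h k + 2 * Nsum k h
      = ∑ q ∈ Icc (1:ℤ) (h-1), (2*(Wq k h q)*q + 2*q*(ε q)) := by
    rw [hVW, hNW, ← Finset.sum_add_distrib]
  rw [key]
  have hsplit : (∑ q ∈ Icc (1:ℤ) (h-1), (2*(Wq k h q)*q + 2*q*(ε q)))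
      = (∑ q ∈ Icc (1:ℤ) (h-2), (2*(Wq k h q)*q + 2*q*(ε q)))
        + (2*(Wq k h (h-1))*(h-1) + 2*(h-1)*(ε (h-1))) := by
    have e : h - 1 = (h-2) + 1 := by ring
    rw [e, icc_succ_top (by omega) (fun q => 2*(Wq k h q)*q + 2*q*(ε q))]
  rw [hsplit]
  have hmid : (∑ q ∈ Icc (1:ℤ) (h-2), (2*(Wq k h q)*q + 2*q*(ε q)))
      = ∑ q ∈ Icc (1:ℤ) (h-2), q*(ε q - ε (q+1)) := by
    apply Finset.sum_congr rfl
    intro q hq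
    simp only [Finset.mem_Icc] at hq
    exact pointwise_mid hh hk hho hko hcopkh hq.1 hq.2
  have htop : 2*(Wq k h (h-1))*(h-1) + 2*(h-1)*(ε (h-1)) = (h-1)*(ε (h-1) + 1) :=
    pointwise_top h3' hk hho hko hcopkh
  rw [hmid, htop, telescope ε (by omega)]
  have hsum2 : (∑ q ∈ Icc (1:ℤ) (h-2), ε q) = - ε (h-1) := by
    have e : h - 1 = (h-2) + 1 := by ring
    rw [e, icc_succ_top (by omega) ε] at hsum0
    have e2 : (h-2) + 1 = h - 1 := by ring
    rw [e2] at hsum0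
    linarith [hsum0]
  rw [hsum2]
  have : (h-2) + 1 = h - 1 := by ring
  rw [this]
  ring

lemma reciprocity {h k : ℤ} (hh : 0 < h) (hk : 0 < k) (hho : h % 2 = 1) (hko : k % 2 = 1)
    (hcophk : IsCoprime h k) (hcopkh : IsCoprime k h) :
    2*(h * Nsum h k) + 2*(k * Nsum k h) = h*k - 1 := by
  have p := perm_lemma hk hko hcophk
  have b := bridge hh hk hho hko hcopkh hcophk
  linear_combination p + k * b

lemma floor_int_div (a b : ℤ) (hb : 0 < b) : ⌊(a:ℚ)/(b:ℚ)⌋ = a / b := by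
  lift b to ℕ using (by omega : (0:ℤ) ≤ b)
  rw [show ((b:ℤ):ℚ) = (b:ℚ) by push_cast; rfl]
  exact Rat.floor_intCast_div_natCast a b

lemma neg_one_zpow_eq_sg (e : ℤ) : (-1 : ℚ)^e = ((sg e : ℤ) : ℚ) := by
  rcases Int.even_or_odd e with he | he
  · rw [Even.neg_one_zpow he]
    unfold sg
    rw [if_pos (Int.even_iff.mp he)]
    norm_num
  · rw [Odd.neg_one_zpow he]
    unfold sg
    rw [if_neg (by rw [Int.odd_iff] at he; omega)]
    norm_num

lemma Y_eq {h k : ℤ} (hh : 0 < h) (hk : 0 < k) (hho : h % 2 = 1) (hko : k % 2 = 1)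
    (hcop : IsCoprime h k) :
    simsekY h k = ((4 * Nsum h k : ℤ) : ℚ) := by
  unfold simsekY
  have hsplit : Finset.Icc (1:ℤ) k = insert k (Finset.Icc 1 (k-1)) := by
    ext x; simp only [Finset.mem_insert, Finset.mem_Icc]; omega
  rw [hsplit, Finset.sum_insert (by simp only [Finset.mem_Icc]; omega)]
  have htop : saw ((k:ℚ)/(k:ℚ)) = 0 := by
    have : (k:ℚ)/(k:ℚ) = 1 := div_self (by positivity)
    rw [this]
    unfold saw
    rw [if_pos (by norm_num)]
  rw [htop, mul_zero, zero_add]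
  have hstep : ∀ j ∈ Finset.Icc (1:ℤ) (k-1),
      (-1 : ℚ) ^ (j + ⌊((h * j : ℤ) : ℚ) / (k : ℚ)⌋) * saw ((j : ℚ) / (k : ℚ))
        = ((sg ((h*j) % k) : ℤ) : ℚ) * ((j:ℚ)/(k:ℚ) - 1/2) := by
    intro j hj
    simp only [Finset.mem_Icc] at hj
    have hfl : ⌊((h * j : ℤ) : ℚ) / (k : ℚ)⌋ = (h*j)/k := by
      exact floor_int_div (h*j) k hk
    have hsaw : saw ((j : ℚ) / (k : ℚ)) = (j:ℚ)/(k:ℚ) - 1/2 := by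
      unfold saw
      have hfl0 : ⌊(j:ℚ)/(k:ℚ)⌋ = 0 := by
        rw [floor_int_div j k hk]
        exact Int.ediv_eq_zero_of_lt (by omega) (by omega)
      rw [hfl0]
      rw [if_neg (by
        push_cast
        intro hzero
        have hj0 : (j:ℚ) = 0 := by
          field_simp at hzero
          simpa using hzero
        have : j = 0 := by exact_mod_cast hj0
        omega)]
      norm_num
    rw [hfl, hsaw, neg_one_zpow_eq_sg]
    congr 2
    apply sg_congr
    have e1 : (h*j) % 2 = j % 2 := by
      rw [Int.mul_emod, hho, one_mul, Int.emod_emod_of_dvd _ dvd_rfl]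
    have e2 : (k*((h*j)/k)) % 2 = ((h*j)/k) % 2 := by
      rw [Int.mul_emod, hko, one_mul, Int.emod_emod_of_dvd _ dvd_rfl]
    have e3 : (h*j) % k = h*j - k*((h*j)/k) := by rw [Int.emod_def]
    omega
  rw [Finset.sum_congr rfl hstep]
  rw [Finset.mul_sum]
  have hstep2 : ∀ j ∈ Finset.Icc (1:ℤ) (k-1),
      4 * (k:ℚ) * (((sg ((h*j) % k) : ℤ) : ℚ) * ((j:ℚ)/(k:ℚ) - 1/2))
        = ((sg ((h*j) % k) * (4*j - 2*k) : ℤ) : ℚ) := by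
    intro j hj
    have hk0 : (k:ℚ) ≠ 0 := by positivity
    push_cast
    field_simp
    ring
  rw [Finset.sum_congr rfl hstep2]
  rw [← Int.cast_sum]
  congr 1
  have expand : (∑ j ∈ Finset.Icc (1:ℤ) (k-1), sg ((h*j) % k) * (4*j - 2*k))
      = 4 * (∑ j ∈ Finset.Icc (1:ℤ) (k-1), sg ((h*j) % k) * j)
        - 2*k*(∑ j ∈ Finset.Icc (1:ℤ) (k-1), sg ((h*j) % k)) := by
    rw [Finset.mul_sum, Finset.mul_sum, ← Finset.sum_sub_distrib]
    apply Finset.sum_congr rfl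
    intro j _; ring
  rw [expand, sg_emod_sum_zero hk hko hcop]
  unfold Nsum
  ring

lemma fib_mod2 : ∀ m : ℕ, (Nat.fib (3*m+1)) % 2 = 1 ∧ (Nat.fib (3*m+2)) % 2 = 1 := by
  intro m
  induction m with
  | zero => simp [Nat.fib]
  | succ p ih =>
      have f2 : Nat.fib (3*p+3) = Nat.fib (3*p+1) + Nat.fib (3*p+2) := by
        rw [show 3*p+3 = (3*p+1)+2 by ring]; exact Nat.fib_add_two
      have f3 : Nat.fib (3*p+4) = Nat.fib (3*p+2) + Nat.fib (3*p+3) := by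
        rw [show 3*p+4 = (3*p+2)+2 by ring]; exact Nat.fib_add_two
      have f4 : Nat.fib (3*p+5) = Nat.fib (3*p+3) + Nat.fib (3*p+4) := by
        rw [show 3*p+5 = (3*p+3)+2 by ring]; exact Nat.fib_add_two
      have e1 : 3*(p+1)+1 = 3*p+4 := by ring
      have e2 : 3*(p+1)+2 = 3*p+5 := by ring
      rw [e1, e2]
      omega

lemma cassini : ∀ m : ℕ, (Nat.fib (m+1) : ℤ)^2 - (Nat.fib m : ℤ) * (Nat.fib (m+2) : ℤ)
    = (-1)^m := by
  intro m
  induction m with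
  | zero => simp [Nat.fib]
  | succ p ih =>
      have f1 : (Nat.fib (p+2) : ℤ) = Nat.fib p + Nat.fib (p+1) := by
        rw [Nat.fib_add_two]; push_cast; ring
      have f2 : (Nat.fib (p+3) : ℤ) = Nat.fib (p+1) + Nat.fib (p+2) := by
        rw [show p+3 = (p+1)+2 by ring, Nat.fib_add_two]; push_cast; ring
      have : (Nat.fib (p+1+1) : ℤ)^2 - (Nat.fib (p+1) : ℤ) * (Nat.fib (p+1+2) : ℤ)
          = -((Nat.fib (p+1) : ℤ)^2 - (Nat.fib p : ℤ) * (Nat.fib (p+2) : ℤ)) := by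
        rw [show p+1+2 = p+3 by ring, f2, f1]
        ring
      rw [this, ih]
      rw [pow_succ]
      ring

lemma fib_coprime_int (n : ℕ) (hn : 0 < n) :
    IsCoprime ((Nat.fib (6*n-1) : ℤ)) ((Nat.fib (6*n+1) : ℤ)) := by
  rw [Int.isCoprime_iff_gcd_eq_one, Int.gcd_natCast_natCast]
  have hg : Nat.gcd (6*n-1) (6*n+1) = 1 := by
    set g := Nat.gcd (6*n-1) (6*n+1) with hg_def
    have h1 : g ∣ 6*n-1 := Nat.gcd_dvd_left _ _
    have h2 : g ∣ 6*n+1 := Nat.gcd_dvd_right _ _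
    have h3 : g ∣ 2 := by
      have : (6*n+1) - (6*n-1) = 2 := by omega
      rw [← this]
      exact Nat.dvd_sub h2 h1
    have h4 : g ≤ 2 := Nat.le_of_dvd (by omega) h3
    have h5 : g ≠ 2 := by
      intro hg2
      rw [hg2] at h2
      obtain ⟨c, hc⟩ := h2
      omega
    have h6 : g ≠ 0 := by
      intro hg0
      have := Nat.eq_zero_of_gcd_eq_zero_left hg0
      omega
    omega
  rw [← Nat.fib_gcd, hg, Nat.fib_one]

end Simsek

theorem stmt_16 (n : ℕ) (hn : 0 < n) (h k : ℤ)
    (hdef : h = (Nat.fib (6 * n - 1) : ℤ)) (kdef : k = (Nat.fib (6 * n + 1) : ℤ)) :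
    (h : ℚ) * simsekY h k + (k : ℚ) * simsekY k h
      = 2 * (h : ℚ) ^ 2 + 2 * (k : ℚ) ^ 2 - 4 * (h : ℚ) * (k : ℚ) := by
  have o1 : Nat.fib (6*n-1) % 2 = 1 := by
    have := (Simsek.fib_mod2 (2*n-1)).2
    rwa [show 3*(2*n-1)+2 = 6*n-1 by omega] at this
  have o2 : Nat.fib (6*n+1) % 2 = 1 := by
    have := (Simsek.fib_mod2 (2*n)).1
    rwa [show 3*(2*n)+1 = 6*n+1 by omega] at this
  have hp1 : 0 < Nat.fib (6*n-1) := Nat.fib_pos.mpr (by omega)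
  have hp2 : 0 < Nat.fib (6*n+1) := Nat.fib_pos.mpr (by omega)
  have hh : 0 < h := by rw [hdef]; exact_mod_cast hp1
  have hk : 0 < k := by rw [kdef]; exact_mod_cast hp2
  have hho : h % 2 = 1 := by rw [hdef]; omega
  have hko : k % 2 = 1 := by rw [kdef]; omega
  have hcophk : IsCoprime h k := by
    rw [hdef, kdef]; exact Simsek.fib_coprime_int n hn
  have hcopkh : IsCoprime k h := hcophk.symm
  have rec_ := Simsek.reciprocity hh hk hho hko hcophk hcopkh
  have Y1 := Simsek.Y_eq hh hk hho hko hcophk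
  have Y2 := Simsek.Y_eq hk hh hko hho hcopkh
  -- Fibonacci identities
  have hcas := Simsek.cassini (6*n-1)
  have eM1 : 6*n-1+1 = 6*n := by omega
  have eM2 : 6*n-1+2 = 6*n+1 := by omega
  rw [eM1, eM2] at hcas
  have hodd : Odd (6*n-1) := ⟨3*n-1, by omega⟩
  rw [hodd.neg_one_pow] at hcas
  have hprod : h * k = (Nat.fib (6*n) : ℤ)^2 + 1 := by
    rw [hdef, kdef]; linarith [hcas]
  have hdiff : k - h = (Nat.fib (6*n) : ℤ) := by
    rw [hdef, kdef]
    have := Nat.fib_add_two (n := 6*n-1)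
    rw [eM1, eM2] at this
    rw [this]
    push_cast
    ring
  -- cast everything to ℚ
  have recQ : 2*((h:ℚ) * ((Simsek.Nsum h k : ℤ) : ℚ)) + 2*((k:ℚ) * ((Simsek.Nsum k h : ℤ) : ℚ))
      = (h:ℚ)*(k:ℚ) - 1 := by exact_mod_cast rec_
  have hprodQ : (h:ℚ)*(k:ℚ) = ((Nat.fib (6*n) : ℤ) : ℚ)^2 + 1 := by exact_mod_cast hprod
  have hdiffQ : (k:ℚ) - (h:ℚ) = ((Nat.fib (6*n) : ℤ) : ℚ) := by exact_mod_cast hdiff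
  rw [Y1, Y2]
  push_cast at recQ hprodQ hdiffQ ⊢
  linear_combination 2*recQ + 2*hprodQ - 2*((k:ℚ) - (h:ℚ) + ((Nat.fib (6*n) : ℕ) : ℚ))*hdiffQ
end

section
/- Let a and b be coprime positive integers. Then for all elements u, v of a commutative ring, (u-1)·Σ_{x=1}^{a-1} u^{x-1}·v^{⌊bx/a⌋} + (v-1)·Σ_{y=1}^{b-1} v^{y-1}·u^{⌊ay/b⌋} = u^{a-1}·v^{b-1} - 1. -/
set_option maxHeartbeats 1000000 in
/-- The two-term polynomial relation of Berndt and Dieter: for coprime positive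
integers `a, b` and commuting ring elements `u, v`,
`(u-1)·Σ_{x=1}^{a-1} u^{x-1} v^{⌊bx/a⌋} + (v-1)·Σ_{y=1}^{b-1} v^{y-1} u^{⌊ay/b⌋}
  = u^{a-1} v^{b-1} - 1`. -/
theorem stmt_17 (a b : ℕ) (ha : 0 < a) (hb : 0 < b) (hco : Nat.Coprime a b)
    (R : Type*) [CommRing R] (u v : R) :
    (u - 1) * (∑ x ∈ Finset.Icc 1 (a - 1), u ^ (x - 1) * v ^ (b * x / a))
      + (v - 1) * (∑ y ∈ Finset.Icc 1 (b - 1), v ^ (y - 1) * u ^ (a * y / b))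
      = u ^ (a - 1) * v ^ (b - 1) - 1 := by
  classical
  have hcb : Nat.Coprime b a := hco.symm
  set F : ℕ → ℕ := fun x => min (b * x / a) (b - 1) with hFdef
  -- For x < a, the min does nothing
  have hFlt : ∀ x, x < a → F x = b * x / a := by
    intro x hx
    have h1 : b * x < b * a := by nlinarith
    have h2 : b * x / a < b := by
      rw [Nat.div_lt_iff_lt_mul ha]; nlinarith
    simp only [hFdef]; omega
  have hFmono : Monotone F := by
    intro x y hxy
    exact min_le_min (Nat.div_le_div_right (Nat.mul_le_mul_left b hxy)) (le_refl _)
  have hF0 : F 0 = 0 := by simp [hFdef]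
  have hFa : F a = b - 1 := by
    simp only [hFdef]
    rw [Nat.mul_div_cancel b ha]
    omega
  -- key non-divisibility from coprimality
  have hnd : ∀ y m : ℕ, 0 < y → y < b → a * y ≠ b * m := by
    intro y m hy1 hy2 h
    have : b ∣ a * y := ⟨m, h⟩
    have : b ∣ y := hcb.dvd_of_dvd_mul_left this
    have := Nat.le_of_dvd hy1 this
    omega
  -- characterize the fibers of y ↦ ⌊a(y+1)/b⌋
  have key : ∀ x, x < a → Finset.filter (fun y => a * (y + 1) / b = x) (Finset.range (b - 1))
      = Finset.Ico (F x) (F (x + 1)) := by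
    intro x hx
    ext y
    simp only [Finset.mem_filter, Finset.mem_range, Finset.mem_Ico]
    constructor
    · rintro ⟨hyb, hdiv⟩
      have hy1 : a * (y + 1) ≠ b * x := hnd (y + 1) x (by omega) (by omega)
      have hy2 : a * (y + 1) ≠ b * (x + 1) := hnd (y + 1) (x + 1) (by omega) (by omega)
      have hle : b * x ≤ a * (y + 1) := by
        have h1 : x ≤ a * (y + 1) / b := le_of_eq hdiv.symm
        have := (Nat.le_div_iff_mul_le hb).mp h1
        nlinarith
      have hlt : a * (y + 1) < b * (x + 1) := by
        have h1 : a * (y + 1) / b < x + 1 := by omega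
        have := (Nat.div_lt_iff_lt_mul hb).mp h1
        nlinarith
      constructor
      · rw [hFlt x hx]
        have : b * x / a < y + 1 := by
          rw [Nat.div_lt_iff_lt_mul ha]
          nlinarith [lt_of_le_of_ne hle (Ne.symm hy1)]
        omega
      · refine lt_min ?_ (by omega)
        have : y + 1 ≤ b * (x + 1) / a := by
          rw [Nat.le_div_iff_mul_le ha]
          nlinarith
        omega
    · rintro ⟨h1, h2⟩
      have hyb : y < b - 1 := lt_of_lt_of_le h2 (min_le_right _ _)
      refine ⟨hyb, ?_⟩
      have hy1 : a * (y + 1) ≠ b * x := hnd (y + 1) x (by omega) (by omega)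
      have hy2 : a * (y + 1) ≠ b * (x + 1) := hnd (y + 1) (x + 1) (by omega) (by omega)
      have hle : b * x ≤ a * (y + 1) := by
        rw [hFlt x hx] at h1
        have h3 : b * x / a < y + 1 := by omega
        have := (Nat.div_lt_iff_lt_mul ha).mp h3
        nlinarith
      have hlt : a * (y + 1) < b * (x + 1) := by
        have h3 : y < b * (x + 1) / a := lt_of_lt_of_le h2 (min_le_left _ _)
        have h4 : y + 1 ≤ b * (x + 1) / a := by omega
        have := (Nat.le_div_iff_mul_le ha).mp h4
        have h5 : a * (y + 1) ≤ b * (x + 1) := by nlinarith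
        exact lt_of_le_of_ne h5 hy2
      apply Nat.div_eq_of_lt_le
      · exact le_of_eq_of_le (mul_comm x b) hle
      · exact hlt.trans_eq (mul_comm b (x + 1))
  -- rewrite both sums over ranges
  have hIcc1 : ∑ x ∈ Finset.Icc 1 (a - 1), u ^ (x - 1) * v ^ (b * x / a)
      = ∑ x ∈ Finset.range (a - 1), u ^ x * v ^ (F (x + 1)) := by
    rw [show Finset.Icc 1 (a-1) = Finset.Ico 1 a by rw [← Finset.Ico_add_one_right_eq_Icc]; congr 1; omega]
    rw [Finset.sum_Ico_eq_sum_range]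
    apply Finset.sum_congr (by congr 1) -- range (a - 1)
    intro i hi
    simp only [Finset.mem_range] at hi
    rw [hFlt (i + 1) (by omega), Nat.add_comm 1 i]
    congr 2
  have hIcc2 : ∑ y ∈ Finset.Icc 1 (b - 1), v ^ (y - 1) * u ^ (a * y / b)
      = ∑ y ∈ Finset.range (b - 1), v ^ y * u ^ (a * (y + 1) / b) := by
    rw [show Finset.Icc 1 (b-1) = Finset.Ico 1 b by rw [← Finset.Ico_add_one_right_eq_Icc]; congr 1; omega]
    rw [Finset.sum_Ico_eq_sum_range]
    apply Finset.sum_congr (by congr 1)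
    intro i hi
    rw [Nat.add_comm 1 i]
    congr 2
  -- regroup the second sum by staircase fibers
  have hreg : ∑ y ∈ Finset.range (b - 1), v ^ y * u ^ (a * (y + 1) / b)
      = ∑ x ∈ Finset.range a, u ^ x * ∑ y ∈ Finset.Ico (F x) (F (x + 1)), v ^ y := by
    have hlt : ∀ y ∈ Finset.range (b - 1), a * (y + 1) / b < a := by
      intro y hy
      simp only [Finset.mem_range] at hy
      rw [Nat.div_lt_iff_lt_mul hb]
      have hy : y + 1 < b := by omega
      nlinarith
    calc ∑ y ∈ Finset.range (b - 1), v ^ y * u ^ (a * (y + 1) / b)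
        = ∑ y ∈ Finset.range (b - 1), ∑ x ∈ Finset.range a,
            if a * (y + 1) / b = x then v ^ y * u ^ x else 0 := by
          refine Finset.sum_congr rfl fun y hy => ?_
          rw [Finset.sum_ite_eq (Finset.range a) (a * (y+1)/b) (fun x => v ^ y * u ^ x)]
          simp [Finset.mem_range.mpr (hlt y hy)]
      _ = ∑ x ∈ Finset.range a, ∑ y ∈ Finset.range (b - 1),
            if a * (y + 1) / b = x then v ^ y * u ^ x else 0 := Finset.sum_comm
      _ = ∑ x ∈ Finset.range a, u ^ x * ∑ y ∈ Finset.Ico (F x) (F (x + 1)), v ^ y := by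
          refine Finset.sum_congr rfl fun x hx => ?_
          simp only [Finset.mem_range] at hx
          rw [← Finset.sum_filter, key x hx, Finset.mul_sum]
          exact Finset.sum_congr rfl fun y _ => mul_comm _ _
  -- geometric sums over Ico
  have geom : ∀ m n : ℕ, m ≤ n → (v - 1) * ∑ y ∈ Finset.Ico m n, v ^ y = v ^ n - v ^ m := by
    intro m n h
    rw [Finset.sum_Ico_eq_sum_range]
    simp_rw [pow_add]
    rw [← Finset.mul_sum]
    calc (v - 1) * (v ^ m * ∑ i ∈ Finset.range (n - m), v ^ i)
        = v ^ m * ((v - 1) * ∑ i ∈ Finset.range (n - m), v ^ i) := by ring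
      _ = v ^ m * (v ^ (n - m) - 1) := by rw [mul_geom_sum]
      _ = v ^ (m + (n - m)) - v ^ m := by rw [pow_add]; ring
      _ = v ^ n - v ^ m := by congr 2; omega
  -- put it together
  rw [hIcc1, hIcc2, hreg]
  rw [Finset.mul_sum, Finset.mul_sum]
  have step2 : ∀ x ∈ Finset.range a,
      (v - 1) * (u ^ x * ∑ y ∈ Finset.Ico (F x) (F (x + 1)), v ^ y)
      = u ^ x * v ^ (F (x + 1)) - u ^ x * v ^ (F x) := by
    intro x _
    calc (v - 1) * (u ^ x * ∑ y ∈ Finset.Ico (F x) (F (x + 1)), v ^ y)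
        = u ^ x * ((v - 1) * ∑ y ∈ Finset.Ico (F x) (F (x + 1)), v ^ y) := by ring
      _ = u ^ x * (v ^ (F (x + 1)) - v ^ (F x)) := by
          rw [geom _ _ (hFmono (Nat.le_succ x))]
      _ = _ := by ring
  rw [Finset.sum_congr rfl step2]
  have step1 : ∀ x ∈ Finset.range (a - 1),
      (u - 1) * (u ^ x * v ^ (F (x + 1)))
      = u ^ (x + 1) * v ^ (F (x + 1)) - u ^ x * v ^ (F (x + 1)) := by
    intro x _
    rw [pow_succ]; ring
  rw [Finset.sum_congr rfl step1]
  rw [Finset.sum_sub_distrib, Finset.sum_sub_distrib]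
  -- telescoping
  have hsplit : ∑ x ∈ Finset.range a, u ^ x * v ^ (F (x + 1))
      = (∑ x ∈ Finset.range (a - 1), u ^ x * v ^ (F (x + 1)))
        + u ^ (a - 1) * v ^ (b - 1) := by
    rw [show a = (a - 1) + 1 by omega, Finset.sum_range_succ]
    rw [show a - 1 + 1 - 1 = a - 1 by omega]
    congr 2
    rw [show a - 1 + 1 = a by omega, hFa]
  have hshift : ∑ x ∈ Finset.range (a - 1), u ^ (x + 1) * v ^ (F (x + 1))
      = (∑ x ∈ Finset.range a, u ^ x * v ^ (F x)) - 1 := by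
    rw [show a = (a - 1) + 1 by omega, Finset.sum_range_succ']
    simp [hF0]
  rw [hsplit, hshift]
  ring
end
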